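/- arXiv:2404.08173 — 5 statements merged into one kernel-verified Lean document; each statement's English description precedes it below -/
import Mathlib

section
/- If a path P = (p_0,...,p_k) from i = p_0 to j = p_k is realized by T_{ijk}(n, i, j) (the prefix of T_{ijk}(n) up to and including (i, j, n)), then for any vertex x > j the path (p_0,...,p_k,x) is realized by T_{ijk}(n, i, x), provided the extended path is a valid path. -/
/-- The sequence `T_ijk(n)`: element at position `a·n² + b·n + c` is `(a+1, b+1, c+1)`. -/
def Tijk (n : ℕ) : List (ℕ × ℕ × ℕ) :=
  (List.range n).flatMap fun a => (List.range n).flatMap fun b =>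
    (List.range n).map fun c => (a + 1, b + 1, c + 1)

/-- The sequence `T_kij(n)`: element at position `a·n² + b·n + c` is `(b+1, c+1, a+1)`. -/
def Tkij (n : ℕ) : List (ℕ × ℕ × ℕ) :=
  (List.range n).flatMap fun a => (List.range n).flatMap fun b =>
    (List.range n).map fun c => (b + 1, c + 1, a + 1)

/-- `T_ijk(n, i, j)`: the prefix of `T_ijk(n)` up to and including the tuple `(i, j, n)`. -/
def TijkPrefix (n i j : ℕ) : List (ℕ × ℕ × ℕ) :=
  (Tijk n).take ((i - 1) * n ^ 2 + (j - 1) * n + n)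

/-- A path `P` (a list of vertices) is realized by a sequence `T` of 3-tuples:
either it has at most one edge, or some position `d` of `T` holds the tuple
`(first, last, split vertex p_x)` with both halves realized by the length-`d` prefix
(`d` here is 0-indexed, so `T.take d` is the prefix strictly before position `d`). -/
inductive Realized : List (ℕ × ℕ × ℕ) → List ℕ → Prop
  | base (T : List (ℕ × ℕ × ℕ)) (P : List ℕ) (h : P.length ≤ 2) : Realized T P
  | step (T : List (ℕ × ℕ × ℕ)) (P : List ℕ) (d x : ℕ)
      (hd : d < T.length) (hx1 : 1 ≤ x) (hx2 : x ≤ P.length - 2)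
      (ht : T.getD d default = (P.getD 0 0, P.getD (P.length - 1) 0, P.getD x 0))
      (h1 : Realized (T.take d) (P.take (x + 1)))
      (h2 : Realized (T.take d) (P.drop x)) : Realized T P

/-- A path with at least one edge, all of whose vertices lie in `[1, n]`. -/
def ValidPath (n : ℕ) (P : List ℕ) : Prop :=
  2 ≤ P.length ∧ ∀ v ∈ P, 1 ≤ v ∧ v ≤ n

/-- Increasing path. -/
def Increasing (P : List ℕ) : Prop := P.Chain' (· < ·)

/-- Decreasing path. -/
def Decreasing (P : List ℕ) : Prop := P.Chain' (· > ·)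

/-- Valley path: every interior vertex is at most the min of the endpoints. -/
def Valley (P : List ℕ) : Prop :=
  ∀ t, 1 ≤ t → t ≤ P.length - 2 →
    P.getD t 0 ≤ min (P.getD 0 0) (P.getD (P.length - 1) 0)

/-- Proper path: no two consecutive vertices `p_t, p_{t+1}` with `1 ≤ t ≤ k-2`
both exceed the min of the endpoints. -/
def Proper (P : List ℕ) : Prop :=
  ¬ ∃ t, 1 ≤ t ∧ t ≤ P.length - 3 ∧
    min (P.getD 0 0) (P.getD (P.length - 1) 0) < P.getD t 0 ∧
    min (P.getD 0 0) (P.getD (P.length - 1) 0) < P.getD (t + 1) 0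

/-- Total weight of a path: the sum of the weights of its consecutive edges. -/
def pathWeight (W : ℕ → ℕ → WithTop ℤ) (P : List ℕ) : WithTop ℤ :=
  ((P.zip P.tail).map fun q => W q.1 q.2).sum

/-- One relaxation step `A[i,j] ← min(A[i,j], A[i,k] + A[k,j])` for the tuple `(i,j,k)`. -/
def relaxStep (A : ℕ → ℕ → WithTop ℤ) (t : ℕ × ℕ × ℕ) : ℕ → ℕ → WithTop ℤ :=
  fun i j => if i = t.1 ∧ j = t.2.1 then min (A i j) (A i t.2.2 + A t.2.2 j) else A i j

/-- Apply the relaxation steps of the sequence `T` in order, starting from `A`. -/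
def relaxAll (A : ℕ → ℕ → WithTop ℤ) (T : List (ℕ × ℕ × ℕ)) : ℕ → ℕ → WithTop ℤ :=
  T.foldl relaxStep A

/-- No negative cycles on the vertex set `[1, n]`. -/
def NoNegCycle (n : ℕ) (W : ℕ → ℕ → WithTop ℤ) : Prop :=
  ∀ P : List ℕ, 2 ≤ P.length → (∀ v ∈ P, 1 ≤ v ∧ v ≤ n) →
    P.getD 0 0 = P.getD (P.length - 1) 0 → 0 ≤ pathWeight W P

lemma realized_prefix {T T' : List (ℕ × ℕ × ℕ)} (hp : T <+: T') {P : List ℕ}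
    (hr : Realized T P) : Realized T' P := by
  obtain ⟨t, rfl⟩ := hp
  cases hr with
  | base _ _ h => exact .base _ _ h
  | step _ _ d y hd hy1 hy2 ht h1 h2 =>
    refine .step _ _ d y ?_ hy1 hy2 ?_ ?_ ?_
    · simp only [List.length_append]; omega
    · rwa [List.getD_append _ _ _ _ hd]
    · rwa [List.take_append_of_le_length hd.le]
    · rwa [List.take_append_of_le_length hd.le]

lemma bind_getD {α β : Type*} (L : ℕ) (d : β) (d' : α) :
    ∀ (l : List α) (f : α → List β), (∀ a ∈ l, (f a).length = L) →
    ∀ q r, q < l.length → r < L →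
    (l.flatMap f).getD (q * L + r) d = (f (l.getD q d')).getD r d := by
  intro l
  induction l with
  | nil => simp
  | cons a t ih =>
    intro f hf q r hq hr
    have hfa : (f a).length = L := hf a (List.mem_cons_self)
    cases q with
    | zero =>
      have hb : (a :: t).flatMap f = f a ++ t.flatMap f := rfl
      rw [hb, zero_mul, zero_add, List.getD_append _ _ _ _ (by omega)]
      simp
    | succ q =>
      have hb : (a :: t).flatMap f = f a ++ t.flatMap f := rfl
      rw [hb, List.getD_append_right _ _ _ _ (by rw [hfa]; nlinarith)]
      have harith : (q + 1) * L + r - (f a).length = q * L + r := by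
        rw [hfa]; ring_nf; omega
      rw [harith]
      simpa using ih f (fun a ha => hf a (List.mem_cons_of_mem _ ha)) q r (by simpa using hq) hr

lemma inner_length (n a : ℕ) :
    ((List.range n).flatMap fun b => (List.range n).map fun c => (a + 1, b + 1, c + 1)).length
      = n ^ 2 := by
  rw [List.length_flatMap]
  simp only [Function.comp_def, List.length_map, List.length_range]
  rw [List.map_const', List.sum_replicate, List.length_range, smul_eq_mul, pow_two]

lemma tijk_length (n : ℕ) : (Tijk n).length = n ^ 3 := by
  rw [Tijk, List.length_flatMap]
  have : ∀ a ∈ List.range n,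
      ((fun a => (List.range n).flatMap fun b => (List.range n).map fun c => (a+1, b+1, c+1)) a).length = n ^ 2 :=
    fun a _ => inner_length n a
  rw [List.map_congr_left (by simpa [Function.comp] using this)]
  simp [pow_succ, pow_two, mul_comm]

lemma tijk_getD (n a b c : ℕ) (ha : a < n) (hb : b < n) (hc : c < n) :
    (Tijk n).getD (a * n ^ 2 + b * n + c) default = (a + 1, b + 1, c + 1) := by
  have hr : b * n + c < n ^ 2 := by nlinarith
  have hga : (List.range n).getD a 0 = a := by
    rw [List.getD_eq_getElem _ _ (by simpa using ha)]; simp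
  have hgb : (List.range n).getD b 0 = b := by
    rw [List.getD_eq_getElem _ _ (by simpa using hb)]; simp
  have hmap : ((List.range n).map fun c => (a + 1, b + 1, c + 1)).getD c default
      = (a + 1, b + 1, c + 1) := by
    rw [List.getD_eq_getElem _ _ (by simpa using hc)]
    simp
  have h1 := bind_getD (n ^ 2) (default : ℕ × ℕ × ℕ) 0 (List.range n)
    (fun a => (List.range n).flatMap fun b => (List.range n).map fun c => (a + 1, b + 1, c + 1))
    (fun a _ => inner_length n a) a (b * n + c) (by simpa using ha) hr
  rw [hga] at h1
  have h2 := bind_getD n (default : ℕ × ℕ × ℕ) 0 (List.range n)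
    (fun b => (List.range n).map fun c => (a + 1, b + 1, c + 1))
    (by simp) b c (by simpa using hb) hc
  rw [hgb, hmap] at h2
  rw [Tijk, add_assoc, h1, h2]

/-- If a path from `i` to `j` is realized by `T_ijk(n, i, j)`, then for any vertex
`x > j` (with `x ∈ [1,n]` so the extended path is valid), the path extended by `x`
is realized by `T_ijk(n, i, x)`. -/
theorem stmt3 (n i j x : ℕ) (P : List ℕ) (hP : ValidPath n P)
    (hi : P.getD 0 0 = i) (hj : P.getD (P.length - 1) 0 = j)
    (hjx : j < x) (hx1 : 1 ≤ x) (hxn : x ≤ n)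
    (h : Realized (TijkPrefix n i j) P) :
    Realized (TijkPrefix n i x) (P ++ [x]) := by
  obtain ⟨hlen, hmem⟩ := hP
  have h0 : 0 < P.length := by omega
  have hiP : P.getD 0 0 ∈ P := by
    rw [List.getD_eq_getElem _ _ h0]; exact List.getElem_mem _
  have hjP : P.getD (P.length - 1) 0 ∈ P := by
    rw [List.getD_eq_getElem _ _ (by omega)]; exact List.getElem_mem _
  obtain ⟨hi1, hi2⟩ := hmem _ hiP
  obtain ⟨hj1, hj2⟩ := hmem _ hjP
  rw [hi] at hi1 hi2
  rw [hj] at hj1 hj2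
  set d := (i - 1) * n ^ 2 + (x - 1) * n + (j - 1) with hd_def
  set M := (i - 1) * n ^ 2 + (x - 1) * n + n with hM_def
  have hian : i - 1 < n := by omega
  have hxan : x - 1 < n := by omega
  have hjan : j - 1 < n := by omega
  have hdM : d < M := by omega
  have hMn3 : M ≤ n ^ 3 := by
    obtain ⟨m, rfl⟩ : ∃ m, n = m + 1 := ⟨n - 1, by omega⟩
    rw [hM_def]
    calc (i - 1) * (m + 1) ^ 2 + (x - 1) * (m + 1) + (m + 1)
        ≤ m * (m + 1) ^ 2 + m * (m + 1) + (m + 1) := by gcongr <;> omega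
      _ = (m + 1) ^ 3 := by ring
  have hdn3 : d < n ^ 3 := lt_of_lt_of_le hdM hMn3
  have hTlen : (TijkPrefix n i x).length = M := by
    rw [TijkPrefix, List.length_take, tijk_length]; omega
  have hdT : d < (TijkPrefix n i x).length := by rw [hTlen]; exact hdM
  have hgetD : (TijkPrefix n i x).getD d default = (i, x, j) := by
    have hdT2 : d < ((Tijk n).take M).length := by
      rw [List.length_take, tijk_length]; omega
    have hkey := tijk_getD n (i - 1) (x - 1) (j - 1) hian hxan hjan
    rw [← hd_def] at hkey
    rw [TijkPrefix, ← hM_def, List.getD_eq_getElem _ _ hdT2, List.getElem_take,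
      ← List.getD_eq_getElem (Tijk n) default (by rw [tijk_length]; exact hdn3), hkey]
    have e1 : i - 1 + 1 = i := by omega
    have e2 : x - 1 + 1 = x := by omega
    have e3 : j - 1 + 1 = j := by omega
    rw [e1, e2, e3]
  refine Realized.step _ _ d (P.length - 1) hdT (by omega) ?_ ?_ ?_ ?_
  · simp only [List.length_append, List.length_singleton]; omega
  · have e0 : (P ++ [x]).getD 0 0 = i := by
      rw [List.getD_append _ _ _ _ h0, hi]
    have elast : (P ++ [x]).getD ((P ++ [x]).length - 1) 0 = x := by
      simp only [List.length_append, List.length_singleton]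
      rw [List.getD_append_right _ _ _ _ (by omega)]
      simp
    have emid : (P ++ [x]).getD (P.length - 1) 0 = j := by
      rw [List.getD_append _ _ _ _ (by omega), hj]
    rw [e0, elast, emid, hgetD]
  · have htake : (P ++ [x]).take (P.length - 1 + 1) = P := by
      have hpp : P.length - 1 + 1 = P.length := by omega
      rw [hpp, List.take_left]
    rw [htake]
    have hTd : (TijkPrefix n i x).take d = (Tijk n).take d := by
      rw [TijkPrefix, ← hM_def, List.take_take, min_eq_left hdM.le]
    rw [hTd]
    have hm'd : (i - 1) * n ^ 2 + (j - 1) * n + n ≤ d := by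
      have h1 : (j - 1) * n + n = j * n := by
        cases j with
        | zero => omega
        | succ m => simp only [Nat.add_sub_cancel]; ring
      have h2 : j * n ≤ (x - 1) * n := Nat.mul_le_mul_right _ (by omega)
      omega
    have hpre : TijkPrefix n i j <+: (Tijk n).take d := by
      rw [TijkPrefix, ← min_eq_left hm'd, ← List.take_take]
      exact List.take_prefix _ _
    exact realized_prefix hpre h
  · apply Realized.base
    rw [List.length_drop]
    simp only [List.length_append, List.length_singleton]
    omega
end

section
/- A nonempty simple path P = (p_0,...,p_k) on vertex set [1,n] is realized by T_{ijk}(n) if and only if: either p_0 < p_k and there exists 0 ≤ i ≤ k such that (p_0,...,p_i) is proper (or i = 0), (p_i,...,p_k) is increasing (or i = k), and p_i ≥ p_0; or p_0 > p_k and there exists 0 ≤ i ≤ k such that (p_0,...,p_i) is decreasing (or i = 0), (p_i,...,p_k) is proper (or i = k), and p_i ≥ p_k. -/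
namespace FW

def dseg (p : ℕ → ℕ) (l r : ℕ) : Prop := ∀ t, l ≤ t → t < r → p (t+1) < p t
def iseg (p : ℕ → ℕ) (l r : ℕ) : Prop := ∀ t, l ≤ t → t < r → p t < p (t+1)
def pseg (p : ℕ → ℕ) (l r : ℕ) : Prop :=
  ∀ t, l < t → t+1 < r → min (p l) (p r) < p t → min (p l) (p r) < p (t+1) → False
def Inj (p : ℕ → ℕ) (l r : ℕ) : Prop := ∀ s t, l ≤ s → s < t → t ≤ r → p s ≠ p t
def NFseg (p : ℕ → ℕ) (l r : ℕ) : Prop :=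
  (p l < p r ∧ ∃ i, l ≤ i ∧ i ≤ r ∧ pseg p l i ∧ iseg p i r ∧ p l ≤ p i) ∨
  (p r < p l ∧ ∃ i, l ≤ i ∧ i ≤ r ∧ dseg p l i ∧ pseg p i r ∧ p r ≤ p i)

variable {p : ℕ → ℕ} {l r a b m x i j : ℕ}

lemma dseg_sub (h : dseg p l r) (h1 : l ≤ a) (h2 : b ≤ r) : dseg p a b :=
  fun t ht1 ht2 => h t (by omega) (by omega)

lemma iseg_sub (h : iseg p l r) (h1 : l ≤ a) (h2 : b ≤ r) : iseg p a b :=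
  fun t ht1 ht2 => h t (by omega) (by omega)

lemma pseg_small (h : r ≤ l + 2) : pseg p l r := fun t h1 h2 => by omega

lemma iseg_small (h : r ≤ l) : iseg p l r := fun t h1 h2 => by omega

lemma dseg_small (h : r ≤ l) : dseg p l r := fun t h1 h2 => by omega

lemma iseg_le (h : iseg p l r) (hla : l ≤ a) (hab : a ≤ b) (hbr : b ≤ r) : p a ≤ p b := by
  obtain ⟨d, rfl⟩ := Nat.exists_eq_add_of_le hab
  clear hab
  induction d with
  | zero => simp
  | succ k ih =>
    have h1 := h (a + k) (by omega) (by omega)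
    have h2 := ih (by omega)
    rw [show a + (k+1) = (a+k)+1 from rfl]
    omega

lemma iseg_lt (h : iseg p l r) (hla : l ≤ a) (hab : a < b) (hbr : b ≤ r) : p a < p b := by
  have h1 : p a ≤ p (b-1) := iseg_le h hla (by omega) (by omega)
  have h2 := h (b-1) (by omega) (by omega)
  rw [show b - 1 + 1 = b by omega] at h2
  omega

lemma dseg_le (h : dseg p l r) (hla : l ≤ a) (hab : a ≤ b) (hbr : b ≤ r) : p b ≤ p a := by
  obtain ⟨d, rfl⟩ := Nat.exists_eq_add_of_le hab
  clear hab
  induction d with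
  | zero => simp
  | succ k ih =>
    have h1 := h (a + k) (by omega) (by omega)
    have h2 := ih (by omega)
    rw [show a + (k+1) = (a+k)+1 from rfl]
    omega

lemma dseg_lt (h : dseg p l r) (hla : l ≤ a) (hab : a < b) (hbr : b ≤ r) : p b < p a := by
  have h1 : p b ≤ p (a+1) := dseg_le h (by omega) (by omega) hbr
  have h2 := h a hla (by omega)
  omega

lemma nfseg_two (hne : p l ≠ p r) (h2 : r ≤ l + 2) (hlr : l ≤ r) : NFseg p l r := by
  rcases lt_or_gt_of_ne hne with h | h
  · exact Or.inl ⟨h, r, hlr, le_refl _, pseg_small h2, iseg_small (le_refl _), le_of_lt h⟩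
  · exact Or.inr ⟨h, l, le_refl _, hlr, dseg_small (le_refl _), pseg_small h2, le_of_lt h⟩

lemma combine (hinj : Inj p 0 m) (hm : 1 ≤ m) (hix : i ≤ x) (hxj : x ≤ j) (hjm : j ≤ m)
    (hdec : dseg p 0 i) (hp1 : pseg p i x) (hxi : p x ≤ p i)
    (hp2 : pseg p x j) (hpxj : p x ≤ p j) (hinc : iseg p j m)
    (hx0 : p x ≤ p 0) (hxm : p x ≤ p m) : NFseg p 0 m := by
  classical
  have hne : p 0 ≠ p m := hinj 0 m (le_refl _) (by omega) (le_refl _)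
  rcases lt_or_gt_of_ne hne with h0m | h0m
  · have hex : ∃ s, j ≤ s ∧ p 0 < p s := ⟨m, hjm, h0m⟩
    set I := Nat.find hex with hIdef
    obtain ⟨hjI, h0I⟩ := Nat.find_spec hex
    have hIm : I ≤ m := Nat.find_min' hex ⟨hjm, h0m⟩
    have hlow : ∀ s, j ≤ s → s < I → p s ≤ p 0 := by
      intro s hjs hsI
      have h := Nat.find_min hex hsI
      push_neg at h
      exact h hjs
    refine Or.inl ⟨h0m, I, Nat.zero_le _, hIm, ?_, iseg_sub hinc hjI (le_refl _), le_of_lt h0I⟩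
    intro t ht hti hq1 hq2
    rw [min_eq_left (le_of_lt h0I)] at hq1 hq2
    have hti' : t > i := by
      by_contra hc
      have := dseg_lt hdec (le_refl _) ht (by omega)
      omega
    have htx : t ≠ x := by intro e; rw [e] at hq1; omega
    have htx' : t + 1 ≠ x := by intro e; rw [e] at hq2; omega
    have htj : t + 1 < j := by
      by_contra hc
      have := hlow (t+1) (by omega) (by omega)
      omega
    rcases Nat.lt_or_ge t x with hlt | hge
    · exact hp1 t (by omega) (by omega) (by omega) (by omega)
    · exact hp2 t (by omega) (by omega) (by omega) (by omega)
  · set I := Nat.findGreatest (fun s => p m < p s) i with hIdef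
    have hspec : p m < p I := Nat.findGreatest_spec (P := fun s => p m < p s) (Nat.zero_le i) h0m
    have hIi : I ≤ i := Nat.findGreatest_le i
    have hlow : ∀ s, I < s → s ≤ i → p s ≤ p m := by
      intro s h1 h2
      have := Nat.findGreatest_is_greatest (P := fun s => p m < p s) h1 h2
      omega
    refine Or.inr ⟨h0m, I, Nat.zero_le _, by omega, dseg_sub hdec (le_refl _) hIi, ?_,
      le_of_lt hspec⟩
    intro t ht htm hq1 hq2
    rw [min_eq_right (le_of_lt hspec)] at hq1 hq2
    have hti : t > i := by
      by_contra hc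
      have := hlow t ht (by omega)
      omega
    have htj : t + 1 < j := by
      by_contra hc
      have := iseg_lt hinc (show j ≤ t+1 by omega) (show t+1 < m by omega) (le_refl _)
      omega
    have htx : t ≠ x := by intro e; rw [e] at hq1; omega
    have htx' : t + 1 ≠ x := by intro e; rw [e] at hq2; omega
    rcases Nat.lt_or_ge t x with hlt | hge
    · exact hp1 t (by omega) (by omega) (by omega) (by omega)
    · exact hp2 t (by omega) (by omega) (by omega) (by omega)


lemma propercase (hinj : Inj p 0 m) (hm : 3 ≤ m) (hprp : pseg p 0 m) (hne : p 0 ≠ p m) :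
    ∃ x, 1 ≤ x ∧ x ≤ m - 1 ∧
      (x = 1 ∨ (p x < p m ∧ NFseg p 0 x)) ∧
      (x = m - 1 ∨ (p x < p 0 ∧ NFseg p x m)) := by
  classical
  set μ := min (p 0) (p m) with hμ
  have hint : ∀ t, 1 ≤ t → t ≤ m-1 → p t ≠ p 0 ∧ p t ≠ p m := by
    intro t h1 h2
    constructor
    · exact fun e => hinj 0 t (le_refl _) h1 (by omega) e.symm
    · exact hinj t m (by omega) (by omega) (le_refl _)
  have hLne : ∃ t, 1 ≤ t ∧ t ≤ m-1 ∧ p t < μ := by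
    by_contra hno
    push_neg at hno
    have h1 := hno 1 (le_refl _) (by omega)
    have h2 := hno (1+1) (by omega) (by omega)
    have i1 := hint 1 (le_refl _) (by omega)
    have i2 := hint (1+1) (by omega) (by omega)
    exact hprp 1 (by omega) (by omega) (by omega) (by omega)
  obtain ⟨t0, ht01, ht02, ht0l⟩ := hLne
  obtain ⟨x, hxmem, hxmax⟩ := Finset.exists_max_image
    ((Finset.Icc 1 (m-1)).filter (fun t => p t < μ)) p
    ⟨t0, by simp only [Finset.mem_filter, Finset.mem_Icc]; exact ⟨⟨ht01, ht02⟩, ht0l⟩⟩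
  simp only [Finset.mem_filter, Finset.mem_Icc] at hxmem
  obtain ⟨⟨hx1, hx2⟩, hxlow⟩ := hxmem
  have hmax' : ∀ t, 1 ≤ t → t ≤ m-1 → p t < μ → p t ≤ p x := by
    intro t h1 h2 h3
    exact hxmax t (by simp only [Finset.mem_filter, Finset.mem_Icc]; exact ⟨⟨h1, h2⟩, h3⟩)
  have key : ∀ t, 1 ≤ t → t + 1 ≤ m - 1 → p x < p t → p x < p (t+1) → False := by
    intro t h1 h2 hq1 hq2
    have hpr := hprp t (by omega) (by omega)
    have i1 := hint t (by omega) (by omega)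
    have i2 := hint (t+1) (by omega) (by omega)
    have hcase : p t < μ ∨ p (t+1) < μ := by
      by_contra hc
      push_neg at hc
      exact hpr (by omega) (by omega)
    rcases hcase with h | h
    · have := hmax' t h1 (by omega) h
      omega
    · have := hmax' (t+1) (by omega) h2 h
      omega
  have hpleft : pseg p 0 x := by
    intro t ht htx hq1 hq2
    have hminl : min (p 0) (p x) = p x := by omega
    rw [hminl] at hq1 hq2
    exact key t (by omega) (by omega) hq1 hq2
  have hpright : pseg p x m := by
    intro t ht htm hq1 hq2
    have hminr : min (p x) (p m) = p x := by omega
    rw [hminr] at hq1 hq2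
    exact key t (by omega) (by omega) hq1 hq2
  refine ⟨x, hx1, hx2, ?_, ?_⟩
  · by_cases he : x = 1
    · exact Or.inl he
    · refine Or.inr ⟨by omega, Or.inr ⟨by omega, 0, le_refl _, by omega,
        dseg_small (le_refl _), hpleft, by omega⟩⟩
  · by_cases he : x = m - 1
    · exact Or.inl he
    · refine Or.inr ⟨by omega, Or.inl ⟨by omega, m, by omega, le_refl _,
        hpright, iseg_small (le_refl _), by omega⟩⟩

lemma backward (hinj : Inj p 0 m) (hm : 2 ≤ m) (hNF : NFseg p 0 m) :
    ∃ x, 1 ≤ x ∧ x ≤ m - 1 ∧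
      (x = 1 ∨ (p x < p m ∧ NFseg p 0 x)) ∧
      (x = m - 1 ∨ (p x < p 0 ∧ NFseg p x m)) := by
  have hne : p 0 ≠ p m := hinj 0 m (le_refl _) (by omega) (le_refl _)
  rcases hNF with ⟨h0m, i, -, him, hprp, hinc, h0i⟩ | ⟨hm0, i, -, him, hdec, hprp, hmi⟩
  · rcases eq_or_lt_of_le him with hie | hilt
    · have hprp' : pseg p 0 m := by rw [hie] at hprp; exact hprp
      rcases Nat.lt_or_ge m 3 with h3 | h3
      · exact ⟨1, le_refl _, by omega, Or.inl rfl, Or.inl (by omega)⟩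
      · exact propercase hinj h3 hprp' hne
    · refine ⟨m-1, by omega, le_refl _, ?_, Or.inl rfl⟩
      by_cases h1 : m - 1 = 1
      · exact Or.inl h1
      · have hlast : p (m-1) < p m := by
          have := hinc (m-1) (by omega) (by omega)
          rw [show m-1+1 = m by omega] at this
          exact this
        refine Or.inr ⟨hlast, Or.inl ⟨?_, i, Nat.zero_le _, by omega, hprp,
          iseg_sub hinc (le_refl _) (by omega), h0i⟩⟩
        have hle : p i ≤ p (m-1) := iseg_le hinc (le_refl _) (by omega) (by omega)
        have hne2 := hinj 0 (m-1) (le_refl _) (by omega) (by omega)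
        omega
  · rcases Nat.eq_zero_or_pos i with rfl | hipos
    · rcases Nat.lt_or_ge m 3 with h3 | h3
      · exact ⟨1, le_refl _, by omega, Or.inl rfl, Or.inl (by omega)⟩
      · exact propercase hinj h3 hprp hne
    · refine ⟨1, le_refl _, by omega, Or.inl rfl, ?_⟩
      by_cases h1 : (1:ℕ) = m - 1
      · exact Or.inl h1
      · have h01 : p 1 < p 0 := by
          have := hdec 0 (le_refl _) (by omega)
          rw [show (0:ℕ)+1 = 1 from rfl] at this
          exact this
        have hle : p i ≤ p 1 := dseg_le hdec (by omega) hipos (le_refl _)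
        have hne2 := hinj 1 m (by omega) (by omega) (le_refl _)
        refine Or.inr ⟨h01, Or.inr ⟨by omega, i, hipos, by omega,
          dseg_sub hdec (by omega) (le_refl _), hprp, hmi⟩⟩

lemma forward (hm : 2 ≤ m) (hx1 : 1 ≤ x) (hx2 : x ≤ m-1)
    (hinj : Inj p 0 m)
    (H1 : x = 1 ∨ (p x < p m ∧ NFseg p 0 x))
    (H2 : x = m - 1 ∨ (p x < p 0 ∧ NFseg p x m)) : NFseg p 0 m := by
  have hne : p 0 ≠ p m := hinj 0 m (le_refl _) (by omega) (le_refl _)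
  rcases H1 with rfl | ⟨hxm, hNF1⟩
  · rcases H2 with h1m | ⟨hx0, hNF2⟩
    · exact nfseg_two hne (by omega) (by omega)
    · rcases hNF2 with ⟨hxm', j, hxj, hjm, hp2, hinc, hxj'⟩ | ⟨hmx, j, hxj, hjm, hdec', hp2, hmj⟩
      · exact combine hinj (by omega) (Nat.zero_le 1) hxj hjm (dseg_small (le_refl _))
          (pseg_small (by omega)) (le_of_lt hx0) hp2 hxj' hinc (le_of_lt hx0) (le_of_lt hxm')
      · have hdec0 : dseg p 0 j := by
          intro t ht htj
          rcases Nat.eq_zero_or_pos t with rfl | htpos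
          · rw [show (0:ℕ)+1 = 1 from rfl]; exact hx0
          · exact hdec' t htpos htj
        have h0m : p m < p 0 := by omega
        exact combine (x := m) (j := m) hinj (by omega) hjm (le_refl _) (le_refl _)
          hdec0 hp2 hmj (pseg_small (by omega)) (le_refl _) (iseg_small (le_refl _))
          (le_of_lt h0m) (le_refl _)
  · rcases H2 with rfl | ⟨hx0, hNF2⟩
    · rcases hNF1 with ⟨h0x, i, -, hix, hp1', hinc', h0i⟩ | ⟨hx0', i, -, hix, hdec', hp1', hxi'⟩
      · have hinc : iseg p i m := by
          intro t hti htm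
          rcases Nat.lt_or_ge t (m-1) with h | h
          · exact hinc' t hti h
          · have : t = m - 1 := by omega
            subst this
            rw [show m-1+1 = m by omega]
            exact hxm
        exact combine (i := 0) (x := 0) (j := i) hinj (by omega) (le_refl _) (Nat.zero_le _)
          (by omega) (dseg_small (le_refl _)) (pseg_small (by omega)) (le_refl _)
          hp1' h0i hinc (le_refl _) (by omega)
      · have hinc : iseg p (m-1) m := by
          intro t hti htm
          have : t = m - 1 := by omega
          subst this
          rw [show m-1+1 = m by omega]
          exact hxm
        exact combine (x := m-1) (j := m-1) hinj (by omega) hix (le_refl _) (by omega)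
          hdec' hp1' hxi' (pseg_small (by omega)) (le_refl _) hinc
          (le_of_lt hx0') (le_of_lt hxm)
    · rcases hNF1 with ⟨h0x, -⟩ | ⟨-, i, -, hix, hdec, hp1, hxi⟩
      · omega
      · rcases hNF2 with ⟨-, j, hxj, hjm, hp2, hinc, hpxj⟩ | ⟨hmx, -⟩
        · exact combine hinj (by omega) hix hxj hjm hdec hp1 hxi hp2 hpxj hinc
            (le_of_lt hx0) (le_of_lt hxm)
        · omega



lemma getD_take' {α : Type*} (l : List α) (d : α) (s t : ℕ) (h : t < s) :
    (l.take s).getD t d = l.getD t d := by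
  simp [List.getD_eq_getElem?_getD, List.getElem?_take, h]

lemma getD_drop' {α : Type*} (l : List α) (d : α) (s t : ℕ) :
    (l.drop s).getD t d = l.getD (s+t) d := by
  simp [List.getD_eq_getElem?_getD, List.getElem?_drop]

lemma bind_len {α : Type*} (f : ℕ → List α) (L k : ℕ) (hf : ∀ j, (f j).length = L) :
    ((List.range k).flatMap f).length = k * L := by
  induction k with
  | zero => simp
  | succ k ih =>
    rw [List.range_succ]
    simp only [List.flatMap_append, List.length_append, ih, List.flatMap_cons, List.flatMap_nil,
      List.append_nil, hf]
    ring

lemma getD_bind {α : Type*} [Inhabited α] (f : ℕ → List α) (L k a b : ℕ)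
    (hf : ∀ j, (f j).length = L) (ha : a < k) (hb : b < L) :
    ((List.range k).flatMap f).getD (a*L+b) default = (f a).getD b default := by
  induction k with
  | zero => omega
  | succ k ih =>
    rw [List.range_succ]
    simp only [List.flatMap_append, List.flatMap_cons, List.flatMap_nil, List.append_nil]
    rcases Nat.lt_or_ge a k with h | h
    · rw [List.getD_append]
      · exact ih h
      · rw [bind_len f L k hf]
        calc a*L+b < a*L+L := by omega
        _ = (a+1)*L := by ring
        _ ≤ k*L := Nat.mul_le_mul_right L (by omega)
    · have hak : a = k := by omega
      rw [List.getD_append_right]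
      · rw [bind_len f L k hf, hak, show k*L+b-k*L = b by omega]
      · rw [bind_len f L k hf, hak]
        omega

lemma tijk_length (n : ℕ) : (Tijk n).length = n*n*n := by
  rw [Tijk, bind_len _ (n*n)]
  · ring
  · intro j
    rw [bind_len _ n]
    · intro j'
      simp

lemma tijk_getD (n a b c : ℕ) (ha : a < n) (hb : b < n) (hc : c < n) :
    (Tijk n).getD (a*(n*n)+(b*n+c)) default = (a+1, b+1, c+1) := by
  rw [Tijk, getD_bind _ (n*n) n a (b*n+c)]
  · rw [getD_bind _ n n b c]
    · rw [List.getD_eq_getElem?_getD]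
      simp [List.getElem?_map, List.getElem?_range hc]
    · intro j; simp
    · exact hb
    · exact hc
  · intro j
    rw [bind_len _ n]
    intro j'; simp
  · exact ha
  · calc b*n+c < b*n+n := by omega
      _ = (b+1)*n := by ring
      _ ≤ n*n := Nat.mul_le_mul_right n (by omega)


def posT (n u v w : ℕ) : ℕ := (u-1)*(n*n) + ((v-1)*n + (w-1))

lemma posT_lt_cube {n u v w : ℕ} (hu1 : 1 ≤ u) (hu2 : u ≤ n) (hv1 : 1 ≤ v) (hv2 : v ≤ n)
    (hw1 : 1 ≤ w) (hw2 : w ≤ n) : posT n u v w < n*n*n := by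
  obtain ⟨k, rfl⟩ : ∃ k, n = k + 1 := ⟨n - 1, by omega⟩
  have h1 : (u-1)*((k+1)*(k+1)) ≤ k*((k+1)*(k+1)) := Nat.mul_le_mul_right _ (by omega)
  have h2 : (v-1)*(k+1) ≤ k*(k+1) := Nat.mul_le_mul_right _ (by omega)
  have h3 : w - 1 ≤ k := by omega
  have key : k*((k+1)*(k+1)) + (k*(k+1) + k) + 1 = (k+1)*(k+1)*(k+1) := by ring
  unfold posT
  omega

lemma tijk_getD_posT {n u v w : ℕ} (hu1 : 1 ≤ u) (hu2 : u ≤ n) (hv1 : 1 ≤ v) (hv2 : v ≤ n)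
    (hw1 : 1 ≤ w) (hw2 : w ≤ n) :
    (Tijk n).getD (posT n u v w) default = (u, v, w) := by
  have := tijk_getD n (u-1) (v-1) (w-1) (by omega) (by omega) (by omega)
  rw [show u-1+1 = u by omega, show v-1+1 = v by omega, show w-1+1 = w by omega] at this
  exact this

lemma decomp (d n : ℕ) : d = (d/(n*n))*(n*n) + ((d%(n*n)/n)*n + d%n) := by
  have e3 : d%(n*n)%n = d%n := Nat.mod_mod_of_dvd d ⟨n, rfl⟩
  calc d = n*n*(d/(n*n)) + d%(n*n) := (Nat.div_add_mod d (n*n)).symm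
    _ = n*n*(d/(n*n)) + (n*(d%(n*n)/n) + d%(n*n)%n) := by rw [Nat.div_add_mod (d%(n*n)) n]
    _ = (d/(n*n))*(n*n) + ((d%(n*n)/n)*n + d%n) := by rw [e3]; ring

lemma tijk_getD_formula {n d : ℕ} (hd : d < n*n*n) :
    (Tijk n).getD d default = (d/(n*n)+1, d%(n*n)/n+1, d%n+1) := by
  have hn : 0 < n := by
    rcases Nat.eq_zero_or_pos n with h0 | h0
    · subst h0; omega
    · exact h0
  have ha : d/(n*n) < n := by
    rw [Nat.div_lt_iff_lt_mul (by positivity)]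
    calc d < n*n*n := hd
      _ = n*(n*n) := by ring
  have hb : d%(n*n)/n < n := by
    rw [Nat.div_lt_iff_lt_mul hn]
    exact Nat.mod_lt _ (by positivity)
  have hc : d%n < n := Nat.mod_lt _ hn
  conv_lhs => rw [decomp d n]
  exact tijk_getD n _ _ _ ha hb hc

lemma tijk_getD_inj {n u v w d : ℕ} (hd : d < n*n*n)
    (h : (Tijk n).getD d default = (u, v, w)) : d = posT n u v w ∧ 1 ≤ u ∧ u ≤ n ∧
      1 ≤ v ∧ v ≤ n ∧ 1 ≤ w ∧ w ≤ n := by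
  have hn : 0 < n := by
    rcases Nat.eq_zero_or_pos n with h0 | h0
    · subst h0; omega
    · exact h0
  have ha : d/(n*n) < n := by
    rw [Nat.div_lt_iff_lt_mul (by positivity)]
    calc d < n*n*n := hd
      _ = n*(n*n) := by ring
  have hb : d%(n*n)/n < n := by
    rw [Nat.div_lt_iff_lt_mul hn]
    exact Nat.mod_lt _ (by positivity)
  have hc : d%n < n := Nat.mod_lt _ hn
  rw [tijk_getD_formula hd] at h
  injection h with h1 h23
  injection h23 with h2 h3
  refine ⟨?_, ?_, ?_, ?_, ?_, ?_, ?_⟩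
  · rw [← h1, ← h2, ← h3]
    unfold posT
    simp only [Nat.add_sub_cancel]
    exact decomp d n
  · rw [← h1]; exact Nat.succ_le_succ (Nat.zero_le _)
  · rw [← h1]; exact ha
  · rw [← h2]; exact Nat.succ_le_succ (Nat.zero_le _)
  · rw [← h2]; exact hb
  · rw [← h3]; exact Nat.succ_le_succ (Nat.zero_le _)
  · rw [← h3]; exact hc

lemma digit_lt_first {n x y z x' y' z' : ℕ} (hy : y < n) (hz : z < n) (hx : x < x') :
    x*(n*n)+(y*n+z) < x'*(n*n)+(y'*n+z') := by
  have hA' : y*n + n = (y+1)*n := by ring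
  have hA : (y+1)*n ≤ n*n := Nat.mul_le_mul_right _ (by omega)
  have hB' : x*(n*n) + n*n = (x+1)*(n*n) := by ring
  have hB : (x+1)*(n*n) ≤ x'*(n*n) := Nat.mul_le_mul_right _ (by omega)
  omega

lemma digit_lt_second {n x y z y' z' : ℕ} (hz : z < n) (hy : y < y') :
    x*(n*n)+(y*n+z) < x*(n*n)+(y'*n+z') := by
  have hA' : y*n + n = (y+1)*n := by ring
  have hA : (y+1)*n ≤ y'*n := Nat.mul_le_mul_right _ (by omega)
  omega

lemma posT_lt_first {n a b c u v w : ℕ} (hn : 0 < n) (hb : b ≤ n) (hc : c ≤ n)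
    (hau : a < u) (ha : 1 ≤ a) : posT n a b c < posT n u v w := by
  unfold posT
  apply digit_lt_first <;> omega

lemma posT_lt_second {n a b c v w : ℕ} (hn : 0 < n) (hc : c ≤ n) (hb : 1 ≤ b)
    (hbv : b < v) : posT n a b c < posT n a v w := by
  unfold posT
  apply digit_lt_second <;> omega

lemma posT_le_first_inv {n a b c u v w : ℕ} (hn : 0 < n) (h : posT n a b c < posT n u v w)
    (hv : v ≤ n) (hw : w ≤ n) (hu : 1 ≤ u) : a ≤ u := by
  by_contra hc'
  have := posT_lt_first (n := n) (a := u) (b := v) (c := w) (u := a) (v := b) (w := c)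
    hn hv hw (by omega) hu
  omega

lemma posT_le_second_inv {n a b c v w : ℕ} (hn : 0 < n) (h : posT n a b c < posT n a v w)
    (hw : w ≤ n) (hv : 1 ≤ v) : b ≤ v := by
  by_contra hc'
  have := posT_lt_second (n := n) (a := a) (b := v) (c := w) (v := b) (w := c)
    hn hw hv (by omega)
  omega


lemma getD_mem {P : List ℕ} {t : ℕ} (h : t < P.length) : P.getD t 0 ∈ P := by
  rw [List.getD_eq_getElem _ _ h]
  exact List.getElem_mem h

lemma nodup_getD_ne {P : List ℕ} (hnd : P.Nodup) {s t : ℕ} (hs : s < P.length)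
    (ht : t < P.length) (hne : s ≠ t) : P.getD s 0 ≠ P.getD t 0 := by
  rw [List.getD_eq_getElem _ _ hs, List.getD_eq_getElem _ _ ht]
  intro h
  exact hne ((List.Nodup.getElem_inj_iff hnd).mp h)

lemma realized_mono : ∀ {T P}, Realized T P → ∀ {T'}, T <+: T' → Realized T' P := by
  intro T P h
  cases h with
  | base T P h => intro T' _; exact Realized.base T' P h
  | step T P d x hd hx1 hx2 ht h1 h2 =>
    intro T' hpre
    have hlen : T.length ≤ T'.length := hpre.length_le
    have htake : T'.take d = T.take d := by
      obtain ⟨s, rfl⟩ := hpre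
      exact List.take_append_of_le_length (by omega)
    have hget : T'.getD d default = T.getD d default := by
      obtain ⟨s, rfl⟩ := hpre
      exact List.getD_append _ _ _ _ hd
    refine Realized.step T' P d x (by omega) hx1 hx2 (by rw [hget]; exact ht) ?_ ?_
    · rw [htake]; exact h1
    · rw [htake]; exact h2

lemma realized_take {n : ℕ} {Q : List ℕ} (hQ : Realized (Tijk n) Q) (D : ℕ)
    (hD : ∀ c, 1 ≤ c → c ≤ n → posT n (Q.getD 0 0) (Q.getD (Q.length-1) 0) c < D)
    (hval : ∀ v ∈ Q, 1 ≤ v ∧ v ≤ n) :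
    Realized ((Tijk n).take D) Q := by
  cases hQ with
  | base _ _ h => exact Realized.base _ _ h
  | step _ _ d x hd hx1 hx2 ht h1 h2 =>
    have hdn : d < n*n*n := by rw [← tijk_length n]; exact hd
    have hQ3 : 3 ≤ Q.length := by omega
    obtain ⟨hdpos, hu1, hun, hv1, hvn, hw1, hwn⟩ := tijk_getD_inj hdn ht
    have hdD : d < D := by
      rw [hdpos]
      exact hD _ hw1 hwn
    refine Realized.step _ _ d x ?_ hx1 hx2 ?_ ?_ ?_
    · rw [List.length_take, tijk_length]; omega
    · rw [getD_take' _ _ _ _ hdD]; exact ht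
    · rw [List.take_take, min_eq_left (le_of_lt hdD)]; exact h1
    · rw [List.take_take, min_eq_left (le_of_lt hdD)]; exact h2

lemma realized_iff {n : ℕ} {P : List ℕ} (hval : ∀ v ∈ P, 1 ≤ v ∧ v ≤ n) (hnd : P.Nodup)
    (hlen : 3 ≤ P.length) :
    Realized (Tijk n) P ↔ ∃ x, 1 ≤ x ∧ x ≤ P.length - 2 ∧
      (x = 1 ∨ (P.getD x 0 < P.getD (P.length-1) 0 ∧ Realized (Tijk n) (P.take (x+1)))) ∧
      (x = P.length - 2 ∨ (P.getD x 0 < P.getD 0 0 ∧ Realized (Tijk n) (P.drop x))) := by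
  have hb0 := hval _ (getD_mem (P := P) (t := 0) (by omega))
  have hbe := hval _ (getD_mem (P := P) (t := P.length - 1) (by omega))
  have hn : 0 < n := by omega
  constructor
  · intro h
    cases h with
    | base _ _ h2 => omega
    | step _ _ d x hd hx1 hx2 ht h1 h2 =>
      have hdn : d < n*n*n := by rw [← tijk_length n]; exact hd
      obtain ⟨hdpos, hu1, hun, hv1, hvn, hw1, hwn⟩ := tijk_getD_inj hdn ht
      refine ⟨x, hx1, hx2, ?_, ?_⟩
      · by_cases hxe : x = 1
        · exact Or.inl hxe
        · right
          have hfull : Realized (Tijk n) (P.take (x+1)) :=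
            realized_mono h1 (List.take_prefix _ _)
          refine ⟨?_, hfull⟩
          have elen : (P.take (x+1)).length = x + 1 := by rw [List.length_take]; omega
          cases h1 with
          | base _ _ hb => rw [elen] at hb; omega
          | step _ _ d' x' hd' hx1' hx2' ht' h1' h2' =>
            have hd'2 : d' < d := by rw [List.length_take] at hd'; omega
            have hd'n : d' < n*n*n := by omega
            rw [getD_take' _ _ _ _ hd'2] at ht'
            rw [elen] at ht' hx2'
            have e0 : (P.take (x+1)).getD 0 0 = P.getD 0 0 := getD_take' _ _ _ _ (by omega)
            have ee : (P.take (x+1)).getD (x+1-1) 0 = P.getD x 0 :=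
              (by rw [show x+1-1 = x by omega]; exact getD_take' _ _ _ _ (by omega))
            have ex' : (P.take (x+1)).getD x' 0 = P.getD x' 0 := getD_take' _ _ _ _ (by omega)
            rw [e0, ee, ex'] at ht'
            obtain ⟨hd'pos, _, _, hx'1, hx'n, _, _⟩ := tijk_getD_inj hd'n ht'
            have hcomp : P.getD x 0 ≤ P.getD (P.length - 1) 0 := by
              refine posT_le_second_inv (a := P.getD 0 0) (c := P.getD x' 0) hn ?_ hwn hv1
              rw [← hd'pos, ← hdpos]
              exact hd'2
            have hne : P.getD x 0 ≠ P.getD (P.length-1) 0 :=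
              nodup_getD_ne hnd (by omega) (by omega) (by omega)
            exact lt_of_le_of_ne hcomp hne
      · by_cases hxe : x = P.length - 2
        · exact Or.inl hxe
        · right
          have hfull : Realized (Tijk n) (P.drop x) :=
            realized_mono h2 (List.take_prefix _ _)
          refine ⟨?_, hfull⟩
          have elen : (P.drop x).length = P.length - x := by rw [List.length_drop]
          cases h2 with
          | base _ _ hb => rw [elen] at hb; omega
          | step _ _ d' x' hd' hx1' hx2' ht' h1' h2' =>
            have hd'2 : d' < d := by rw [List.length_take] at hd'; omega
            have hd'n : d' < n*n*n := by omega
            rw [getD_take' _ _ _ _ hd'2] at ht'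
            rw [elen] at ht' hx2'
            have e0 : (P.drop x).getD 0 0 = P.getD x 0 := by
              rw [getD_drop', Nat.add_zero]
            have ee : (P.drop x).getD (P.length - x - 1) 0 = P.getD (P.length - 1) 0 := by
              rw [getD_drop', show x + (P.length - x - 1) = P.length - 1 by omega]
            have ex' : (P.drop x).getD x' 0 = P.getD (x + x') 0 := by rw [getD_drop']
            rw [e0, ee, ex'] at ht'
            obtain ⟨hd'pos, hx'1, hx'n, _, _, _, _⟩ := tijk_getD_inj hd'n ht'
            have hcomp : P.getD x 0 ≤ P.getD 0 0 := by
              refine posT_le_first_inv (b := P.getD (P.length - 1) 0) (c := P.getD (x + x') 0) hn ?_ hvn hwn hu1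
              rw [← hd'pos, ← hdpos]
              exact hd'2
            have hne : P.getD x 0 ≠ P.getD 0 0 :=
              nodup_getD_ne hnd (by omega) (by omega) (by omega)
            exact lt_of_le_of_ne hcomp hne
  · rintro ⟨x, hx1, hx2, H1, H2⟩
    have hbx := hval _ (getD_mem (P := P) (t := x) (by omega))
    refine Realized.step _ _ (posT n (P.getD 0 0) (P.getD (P.length-1) 0) (P.getD x 0)) x
      ?_ hx1 hx2 ?_ ?_ ?_
    · rw [tijk_length]
      exact posT_lt_cube hb0.1 hb0.2 hbe.1 hbe.2 hbx.1 hbx.2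
    · exact tijk_getD_posT hb0.1 hb0.2 hbe.1 hbe.2 hbx.1 hbx.2
    · rcases H1 with hxe | ⟨hlt, hfull⟩
      · refine Realized.base _ _ ?_
        rw [List.length_take]
        omega
      · refine realized_take hfull _ ?_ (fun v hv => hval v (List.take_subset _ _ hv))
        intro c hc1 hc2
        have elen : (P.take (x+1)).length = x + 1 := by rw [List.length_take]; omega
        rw [elen]
        have e0 : (P.take (x+1)).getD 0 0 = P.getD 0 0 := getD_take' _ _ _ _ (by omega)
        have ee : (P.take (x+1)).getD (x+1-1) 0 = P.getD x 0 :=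
          (by rw [show x+1-1 = x by omega]; exact getD_take' _ _ _ _ (by omega))
        rw [e0, ee]
        exact posT_lt_second hn hc2 hbx.1 hlt
    · rcases H2 with hxe | ⟨hlt, hfull⟩
      · refine Realized.base _ _ ?_
        rw [List.length_drop]
        omega
      · refine realized_take hfull _ ?_ (fun v hv => hval v (List.drop_subset _ _ hv))
        intro c hc1 hc2
        have elen : (P.drop x).length = P.length - x := by rw [List.length_drop]
        rw [elen]
        have e0 : (P.drop x).getD 0 0 = P.getD x 0 := by rw [getD_drop', Nat.add_zero]
        have ee : (P.drop x).getD (P.length - x - 1) 0 = P.getD (P.length - 1) 0 := by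
          rw [getD_drop', show x + (P.length - x - 1) = P.length - 1 by omega]
        rw [e0, ee]
        exact posT_lt_first hn hbe.2 hc2 hlt hbx.1

lemma chain'_iff_getD {R : ℕ → ℕ → Prop} (Q : List ℕ) :
    Q.Chain' R ↔ ∀ t, t + 1 < Q.length → R (Q.getD t 0) (Q.getD (t+1) 0) := by
  show List.IsChain R Q ↔ _
  rw [List.isChain_iff_getElem]
  constructor
  · intro h t ht
    have := h t (by omega)
    rwa [← List.getD_eq_getElem _ 0 (by omega), ← List.getD_eq_getElem _ 0 (by omega)] at this
  · intro h t ht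
    have := h t (by omega)
    rwa [← List.getD_eq_getElem _ 0 (by omega), ← List.getD_eq_getElem _ 0 (by omega)]

lemma dec_take_iff {Q : List ℕ} {i : ℕ} (hik : i + 1 ≤ Q.length) :
    Decreasing (Q.take (i+1)) ↔ dseg (fun t => Q.getD t 0) 0 i := by
  have hlen : (Q.take (i+1)).length = i+1 := by rw [List.length_take]; omega
  rw [Decreasing, chain'_iff_getD]
  constructor
  · intro h t ht1 ht2
    have := h t (by omega)
    rwa [getD_take' _ _ _ _ (by omega), getD_take' _ _ _ _ (by omega)] at this
  · intro h t ht
    rw [hlen] at ht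
    rw [getD_take' _ _ _ _ (by omega), getD_take' _ _ _ _ (by omega)]
    exact h t (by omega) (by omega)

lemma inc_drop_iff {Q : List ℕ} {i : ℕ} (hik : i ≤ Q.length - 1) (hQ : 1 ≤ Q.length) :
    Increasing (Q.drop i) ↔ iseg (fun t => Q.getD t 0) i (Q.length - 1) := by
  have hlen : (Q.drop i).length = Q.length - i := List.length_drop
  rw [Increasing, chain'_iff_getD]
  constructor
  · intro h t ht1 ht2
    have := h (t - i) (by rw [hlen]; omega)
    rwa [getD_drop', getD_drop', show i + (t - i) = t by omega,
      show i + (t - i + 1) = t + 1 by omega] at this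
  · intro h t ht
    rw [hlen] at ht
    rw [getD_drop', getD_drop']
    have := h (i + t) (by omega) (by omega)
    rwa [show i + (t+1) = i + t + 1 by omega]

lemma prp_take_iff {Q : List ℕ} {i : ℕ} (hik : i + 1 ≤ Q.length) :
    Proper (Q.take (i+1)) ↔ pseg (fun t => Q.getD t 0) 0 i := by
  have hlen : (Q.take (i+1)).length = i+1 := by rw [List.length_take]; omega
  have egd : ∀ t, t ≤ i → (Q.take (i+1)).getD t 0 = Q.getD t 0 :=
    fun t ht => getD_take' _ _ _ _ (by omega)
  constructor
  · intro h t ht1 ht2 hm1 hm2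
    refine h ⟨t, by omega, by omega, ?_, ?_⟩
    · rw [hlen, show i+1-1 = i by omega, egd 0 (by omega), egd i (le_refl i), egd t (by omega)]
      exact hm1
    · rw [hlen, show i+1-1 = i by omega, egd 0 (by omega), egd i (le_refl i),
        egd (t+1) (by omega)]
      exact hm2
  · rintro h ⟨t, ht1, ht2, hm1, hm2⟩
    rw [hlen] at ht2
    rw [hlen, show i+1-1 = i by omega, egd 0 (by omega), egd i (le_refl i),
      egd t (by omega)] at hm1
    rw [hlen, show i+1-1 = i by omega, egd 0 (by omega), egd i (le_refl i),
      egd (t+1) (by omega)] at hm2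
    exact h t (by omega) (by omega) hm1 hm2

lemma prp_drop_iff {Q : List ℕ} {i : ℕ} (hik : i ≤ Q.length - 1) (hQ : 1 ≤ Q.length) :
    Proper (Q.drop i) ↔ pseg (fun t => Q.getD t 0) i (Q.length - 1) := by
  have hlen : (Q.drop i).length = Q.length - i := List.length_drop
  have egd : ∀ t, (Q.drop i).getD t 0 = Q.getD (i+t) 0 := fun t => getD_drop' _ _ _ _
  constructor
  · intro h t ht1 ht2 hm1 hm2
    refine h ⟨t - i, by omega, by omega, ?_, ?_⟩
    · simp only [hlen, egd]
      rw [show i + 0 = i by omega, show i + (Q.length - i - 1) = Q.length - 1 by omega,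
        show i + (t - i) = t by omega]
      exact hm1
    · simp only [hlen, egd]
      rw [show i + 0 = i by omega, show i + (Q.length - i - 1) = Q.length - 1 by omega,
        show i + (t - i + 1) = t + 1 by omega]
      exact hm2
  · rintro h ⟨t, ht1, ht2, hm1, hm2⟩
    rw [hlen] at ht2
    simp only [hlen, egd] at hm1 hm2
    rw [show i + 0 = i by omega, show i + (Q.length - i - 1) = Q.length - 1 by omega] at hm1 hm2
    refine h (i + t) (by omega) (by omega) hm1 ?_
    rwa [show i + t + 1 = i + (t + 1) by omega]

lemma dseg_congr {p q : ℕ → ℕ} {l r : ℕ} (h : ∀ t, l ≤ t → t ≤ r → p t = q t)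
    (hp : dseg p l r) : dseg q l r := by
  intro t ht1 ht2
  rw [← h t (by omega) (by omega), ← h (t+1) (by omega) (by omega)]
  exact hp t ht1 ht2

lemma iseg_congr {p q : ℕ → ℕ} {l r : ℕ} (h : ∀ t, l ≤ t → t ≤ r → p t = q t)
    (hp : iseg p l r) : iseg q l r := by
  intro t ht1 ht2
  rw [← h t (by omega) (by omega), ← h (t+1) (by omega) (by omega)]
  exact hp t ht1 ht2

lemma pseg_congr {p q : ℕ → ℕ} {l r : ℕ} (h : ∀ t, l ≤ t → t ≤ r → p t = q t)
    (hp : pseg p l r) : pseg q l r := by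
  intro t ht1 ht2 hm1 hm2
  rw [← h l (le_refl _) (by omega), ← h r (by omega) (le_refl _),
    ← h t (by omega) (by omega)] at hm1
  rw [← h l (le_refl _) (by omega), ← h r (by omega) (le_refl _),
    ← h (t+1) (by omega) (by omega)] at hm2
  exact hp t ht1 ht2 hm1 hm2

lemma nfseg_congr {p q : ℕ → ℕ} {l r : ℕ} (hlr' : l ≤ r)
    (h : ∀ t, l ≤ t → t ≤ r → p t = q t) (hp : NFseg p l r) : NFseg q l r := by
  have el : p l = q l := h l (le_refl _) hlr'
  have er : p r = q r := h r hlr' (le_refl _)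
  rcases hp with ⟨hlr, i, hi1, hi2, hp1, hp2, hp3⟩ | ⟨hlr, i, hi1, hi2, hp1, hp2, hp3⟩
  · have ei : p i = q i := h i hi1 hi2
    exact Or.inl ⟨by omega, i, hi1, hi2, pseg_congr (fun t ht1 ht2 => h t ht1 (by omega)) hp1,
      iseg_congr (fun t ht1 ht2 => h t (by omega) ht2) hp2, by omega⟩
  · have ei : p i = q i := h i hi1 hi2
    exact Or.inr ⟨by omega, i, hi1, hi2, dseg_congr (fun t ht1 ht2 => h t ht1 (by omega)) hp1,
      pseg_congr (fun t ht1 ht2 => h t (by omega) ht2) hp2, by omega⟩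

lemma dseg_shift {p : ℕ → ℕ} {x a b : ℕ} (h : dseg (fun t => p (x+t)) a b) :
    dseg p (x+a) (x+b) := by
  intro t ht1 ht2
  have := h (t - x) (by omega) (by omega)
  simp only at this
  rwa [show x + (t - x + 1) = t + 1 by omega, show x + (t - x) = t by omega] at this

lemma iseg_shift {p : ℕ → ℕ} {x a b : ℕ} (h : iseg (fun t => p (x+t)) a b) :
    iseg p (x+a) (x+b) := by
  intro t ht1 ht2
  have := h (t - x) (by omega) (by omega)
  simp only at this
  rwa [show x + (t - x + 1) = t + 1 by omega, show x + (t - x) = t by omega] at this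

lemma pseg_shift {p : ℕ → ℕ} {x a b : ℕ} (h : pseg (fun t => p (x+t)) a b) :
    pseg p (x+a) (x+b) := by
  intro t ht1 ht2 hm1 hm2
  refine h (t - x) (by omega) (by omega) ?_ ?_
  · simp only
    rwa [show x + (t - x) = t by omega]
  · simp only
    rwa [show x + (t - x + 1) = t + 1 by omega]

lemma nfseg_shift {p : ℕ → ℕ} {x a b : ℕ} (h : NFseg (fun t => p (x+t)) a b) :
    NFseg p (x+a) (x+b) := by
  rcases h with ⟨hlr, i, hi1, hi2, hp1, hp2, hp3⟩ | ⟨hlr, i, hi1, hi2, hp1, hp2, hp3⟩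
  · exact Or.inl ⟨hlr, x+i, by omega, by omega, pseg_shift hp1, iseg_shift hp2, hp3⟩
  · exact Or.inr ⟨hlr, x+i, by omega, by omega, dseg_shift hp1, pseg_shift hp2, hp3⟩

lemma dseg_unshift {p : ℕ → ℕ} {x a b : ℕ} (h : dseg p (x+a) (x+b)) :
    dseg (fun t => p (x+t)) a b := by
  intro t ht1 ht2
  exact h (x+t) (by omega) (by omega)

lemma iseg_unshift {p : ℕ → ℕ} {x a b : ℕ} (h : iseg p (x+a) (x+b)) :
    iseg (fun t => p (x+t)) a b := by
  intro t ht1 ht2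
  exact h (x+t) (by omega) (by omega)

lemma pseg_unshift {p : ℕ → ℕ} {x a b : ℕ} (h : pseg p (x+a) (x+b)) :
    pseg (fun t => p (x+t)) a b := by
  intro t ht1 ht2 hm1 hm2
  exact h (x+t) (by omega) (by omega) hm1 hm2

lemma nfseg_unshift {p : ℕ → ℕ} {x a b : ℕ} (h : NFseg p (x+a) (x+b)) :
    NFseg (fun t => p (x+t)) a b := by
  rcases h with ⟨hlr, i, hi1, hi2, hp1, hp2, hp3⟩ | ⟨hlr, i, hi1, hi2, hp1, hp2, hp3⟩
  · refine Or.inl ⟨hlr, i - x, by omega, by omega, ?_, ?_, ?_⟩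
    · apply pseg_unshift
      rwa [show x + (i-x) = i by omega]
    · apply iseg_unshift
      rwa [show x + (i-x) = i by omega]
    · show p (x+a) ≤ p (x+(i-x))
      rwa [show x + (i-x) = i by omega]
  · refine Or.inr ⟨hlr, i - x, by omega, by omega, ?_, ?_, ?_⟩
    · apply dseg_unshift
      rwa [show x + (i-x) = i by omega]
    · apply pseg_unshift
      rwa [show x + (i-x) = i by omega]
    · show p (x+b) ≤ p (x+(i-x))
      rwa [show x + (i-x) = i by omega]

lemma main_aux (n : ℕ) : ∀ (N : ℕ) (P : List ℕ), P.length ≤ N →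
    (∀ v ∈ P, 1 ≤ v ∧ v ≤ n) → P.Nodup → 2 ≤ P.length →
    (Realized (Tijk n) P ↔ NFseg (fun t => P.getD t 0) 0 (P.length - 1)) := by
  intro N
  induction N with
  | zero => intro P h _ _ h2; omega
  | succ N ih =>
    intro P hPN hval hnd h2
    have hinj : Inj (fun t => P.getD t 0) 0 (P.length - 1) := by
      intro s t hs hst ht
      exact nodup_getD_ne hnd (by omega) (by omega) (by omega)
    by_cases h3 : P.length < 3
    · constructor
      · intro _
        exact nfseg_two (hinj 0 (P.length - 1) (le_refl _) (by omega) (le_refl _))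
          (by omega) (by omega)
      · intro _
        exact Realized.base _ _ (by omega)
    · push_neg at h3
      rw [realized_iff hval hnd h3]
      constructor
      · rintro ⟨x, hx1, hx2, H1, H2⟩
        refine forward (m := P.length - 1) (x := x) (by omega) hx1 (by omega) hinj ?_ ?_
        · rcases H1 with he | ⟨hlt, hre⟩
          · exact Or.inl he
          · refine Or.inr ⟨hlt, ?_⟩
            have hre' := (ih (P.take (x+1))
              (by rw [List.length_take]; omega)
              (fun v hv => hval v (List.take_subset _ _ hv))
              ((List.take_sublist _ _).nodup hnd)
              (by rw [List.length_take]; omega)).mp hre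
            rw [List.length_take, show min (x+1) P.length - 1 = x by omega] at hre'
            exact nfseg_congr (by omega) (fun t ht1 ht2 => getD_take' _ _ _ _ (by omega)) hre'
        · rcases H2 with he | ⟨hlt, hre⟩
          · exact Or.inl (by omega)
          · refine Or.inr ⟨hlt, ?_⟩
            have hre' := (ih (P.drop x)
              (by rw [List.length_drop]; omega)
              (fun v hv => hval v (List.drop_subset _ _ hv))
              ((List.drop_sublist _ _).nodup hnd)
              (by rw [List.length_drop]; omega)).mp hre
            rw [List.length_drop] at hre'
            have hre'' : NFseg (fun t => P.getD (x + t) 0) 0 (P.length - x - 1) :=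
              nfseg_congr (by omega) (fun t ht1 ht2 => getD_drop' _ _ _ _) hre'
            have := nfseg_shift (p := fun t => P.getD t 0) (x := x) hre''
            rwa [show x + 0 = x by omega, show x + (P.length - x - 1) = P.length - 1 by omega]
              at this
      · intro hNF
        obtain ⟨x, hx1, hx2, H1, H2⟩ := backward hinj (by omega) hNF
        refine ⟨x, hx1, by omega, ?_, ?_⟩
        · rcases H1 with he | ⟨hlt, hNF1⟩
          · exact Or.inl he
          · refine Or.inr ⟨hlt, ?_⟩
            refine (ih (P.take (x+1))
              (by rw [List.length_take]; omega)
              (fun v hv => hval v (List.take_subset _ _ hv))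
              ((List.take_sublist _ _).nodup hnd)
              (by rw [List.length_take]; omega)).mpr ?_
            rw [List.length_take, show min (x+1) P.length - 1 = x by omega]
            exact nfseg_congr (by omega)
              (fun t ht1 ht2 => (getD_take' _ _ _ _ (by omega)).symm) hNF1
        · rcases H2 with he | ⟨hlt, hNF2⟩
          · exact Or.inl (by omega)
          · refine Or.inr ⟨hlt, ?_⟩
            refine (ih (P.drop x)
              (by rw [List.length_drop]; omega)
              (fun v hv => hval v (List.drop_subset _ _ hv))
              ((List.drop_sublist _ _).nodup hnd)
              (by rw [List.length_drop]; omega)).mpr ?_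
            rw [List.length_drop]
            have hx' : NFseg (fun t => P.getD t 0) (x + 0) (x + (P.length - x - 1)) := by
              rwa [show x + 0 = x by omega,
                show x + (P.length - x - 1) = P.length - 1 by omega]
            have h1 : NFseg (fun t => P.getD (x + t) 0) 0 (P.length - x - 1) :=
              nfseg_unshift hx'
            exact nfseg_congr (by omega) (fun t ht1 ht2 => (getD_drop' _ _ _ _).symm) h1

end FW

/-- Main characterization: a nonempty simple path on `[1,n]` is realized by `T_ijk(n)`
iff it splits as a proper part followed by an increasing part (junction `≥ p_0`) when
`p_0 < p_k`, or as a decreasing part followed by a proper part (junction `≥ p_k`) when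
`p_0 > p_k`. -/
theorem stmt4 (n : ℕ) (P : List ℕ) (hP : ValidPath n P) (hnd : P.Nodup) :
    Realized (Tijk n) P ↔
      (P.getD 0 0 < P.getD (P.length - 1) 0 ∧ ∃ i ≤ P.length - 1,
        (i = 0 ∨ Proper (P.take (i + 1))) ∧
        (i = P.length - 1 ∨ Increasing (P.drop i)) ∧
        P.getD 0 0 ≤ P.getD i 0) ∨
      (P.getD (P.length - 1) 0 < P.getD 0 0 ∧ ∃ i ≤ P.length - 1,
        (i = 0 ∨ Decreasing (P.take (i + 1))) ∧
        (i = P.length - 1 ∨ Proper (P.drop i)) ∧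
        P.getD (P.length - 1) 0 ≤ P.getD i 0) := by
  obtain ⟨h2, hval⟩ := hP
  rw [FW.main_aux n P.length P (le_refl _) hval hnd h2]
  constructor
  · intro h
    rcases h with ⟨hlr, i, hi1, hi2, hp1, hp2, hp3⟩ | ⟨hlr, i, hi1, hi2, hp1, hp2, hp3⟩
    · exact Or.inl ⟨hlr, i, hi2, Or.inr ((FW.prp_take_iff (by omega)).mpr hp1),
        Or.inr ((FW.inc_drop_iff hi2 (by omega)).mpr hp2), hp3⟩
    · exact Or.inr ⟨hlr, i, hi2, Or.inr ((FW.dec_take_iff (by omega)).mpr hp1),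
        Or.inr ((FW.prp_drop_iff hi2 (by omega)).mpr hp2), hp3⟩
  · intro h
    rcases h with ⟨hlr, i, hi2, hp1, hp2, hp3⟩ | ⟨hlr, i, hi2, hp1, hp2, hp3⟩
    · refine Or.inl ⟨hlr, i, by omega, hi2, ?_, ?_, hp3⟩
      · rcases hp1 with he | hp1
        · subst he
          exact FW.pseg_small (by omega)
        · exact (FW.prp_take_iff (by omega)).mp hp1
      · rcases hp2 with he | hp2
        · rw [he]
          exact FW.iseg_small (by omega)
        · exact (FW.inc_drop_iff hi2 (by omega)).mp hp2
    · refine Or.inr ⟨hlr, i, by omega, hi2, ?_, ?_, hp3⟩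
      · rcases hp1 with he | hp1
        · subst he
          exact FW.dseg_small (by omega)
        · exact (FW.dec_take_iff (by omega)).mp hp1
      · rcases hp2 with he | hp2
        · rw [he]
          exact FW.pseg_small (by omega)
        · exact (FW.prp_drop_iff hi2 (by omega)).mp hp2
end

section
/- Every simple path in a graph on n vertices is realized by the sequence (T_{ijk}(n))³, i.e., T_{ijk}(n) concatenated with itself three times. Consequently, running the IJK-ordered Floyd-Warshall loop three times computes the correct all-pairs shortest path matrix on graphs with no negative cycles. -/
lemma bind_const_length {α : Type} (L : ℕ → List α) (K : ℕ) (hL : ∀ a, (L a).length = K) :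
    ∀ n, ((List.range n).flatMap L).length = n * K := by
  intro n
  induction n with
  | zero => simp
  | succ m ih =>
      rw [List.range_succ]; rw [List.flatMap_append, List.length_append]
      rw [ih]
      simp [hL, Nat.succ_mul]

lemma getElem?_bind_range {α : Type} (L : ℕ → List α) (K : ℕ) (hL : ∀ a, (L a).length = K) :
    ∀ n a c, a < n → c < K → ((List.range n).flatMap L)[a * K + c]? = (L a)[c]? := by
  intro n
  induction n with
  | zero => omega
  | succ m ih =>
      intro a c ha hc
      rw [List.range_succ]; rw [List.flatMap_append]
      rcases Nat.lt_or_ge a m with h | h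
      · rw [List.getElem?_append_left, ih a c h hc]
        calc a * K + c < a * K + K := by omega
        _ ≤ m * K := by nlinarith
        _ = _ := (bind_const_length L K hL m).symm
      · have : a = m := by omega
        subst this
        rw [List.getElem?_append_right (by rw [bind_const_length L K hL]; omega)]
        simp [bind_const_length L K hL]

lemma Tijk_length (n : ℕ) : (Tijk n).length = n * (n * n) := by
  apply bind_const_length
  intro a
  apply bind_const_length
  intro b
  simp

def T3 (n : ℕ) : List (ℕ × ℕ × ℕ) := Tijk n ++ Tijk n ++ Tijk n

lemma T3_length (n : ℕ) : (T3 n).length = 3 * (n * (n * n)) := by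
  simp [T3, Tijk_length]; ring

lemma Tijk_getElem? (n a b c : ℕ) (ha : a < n) (hb : b < n) (hc : c < n) :
    (Tijk n)[a * (n * n) + (b * n + c)]? = some (a + 1, b + 1, c + 1) := by
  unfold Tijk
  rw [getElem?_bind_range _ (n * n) (fun a => bind_const_length _ n (by simp) n) n a _ ha
    (by nlinarith)]
  rw [getElem?_bind_range _ n (by simp) n b c hb hc]
  simp [hc]

lemma pos_lt_N (n a b c : ℕ) (ha : a < n) (hb : b < n) (hc : c < n) :
    a * (n * n) + (b * n + c) < n * (n * n) := by
  calc a * (n * n) + (b * n + c) < a * (n * n) + (b * n + n) := by omega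
  _ ≤ a * (n * n) + n * n := by nlinarith
  _ ≤ (n - 1) * (n * n) + n * n := by
      have : a ≤ n - 1 := by omega
      nlinarith
  _ = n * (n * n) := by
      rw [← Nat.succ_mul, Nat.succ_eq_add_one, Nat.sub_add_cancel (by omega : 1 ≤ n)]

lemma T3_getD (n a b c e : ℕ) (ha : a < n) (hb : b < n) (hc : c < n) (he : e ≤ 2) :
    (T3 n).getD (e * (n * (n * n)) + (a * (n * n) + (b * n + c))) default
      = (a + 1, b + 1, c + 1) := by
  have hN := Tijk_length n
  have hlt := pos_lt_N n a b c ha hb hc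
  rw [List.getD_eq_getElem?_getD]
  unfold T3
  interval_cases e
  · rw [List.getElem?_append_left (by rw [List.length_append, hN]; omega),
      List.getElem?_append_left (by rw [hN]; omega),
      (by omega : 0 * (n * (n * n)) + (a * (n * n) + (b * n + c)) = a * (n * n) + (b * n + c)),
      Tijk_getElem? n a b c ha hb hc]
    rfl
  · rw [List.getElem?_append_left (by rw [List.length_append, hN]; omega),
      List.getElem?_append_right (by rw [hN]; omega)]
    rw [hN, (by omega : 1 * (n * (n * n)) + (a * (n * n) + (b * n + c)) - n * (n * n)
        = a * (n * n) + (b * n + c)),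
      Tijk_getElem? n a b c ha hb hc]
    rfl
  · rw [List.getElem?_append_right (by rw [List.length_append, hN]; omega)]
    rw [List.length_append, hN, (by omega : 2 * (n * (n * n)) + (a * (n * n) + (b * n + c))
        - (n * (n * n) + n * (n * n)) = a * (n * n) + (b * n + c)),
      Tijk_getElem? n a b c ha hb hc]
    rfl

lemma Realized.mono {T T' : List (ℕ × ℕ × ℕ)} {P : List ℕ} (h : Realized T P)
    (hp : T <+: T') : Realized T' P := by
  obtain ⟨t, rfl⟩ := hp
  cases h with
  | base _ _ h => exact .base _ _ h
  | step _ _ d x hd hx1 hx2 ht h1 h2 =>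
      refine .step _ _ d x (by rw [List.length_append]; omega) hx1 hx2 ?_ ?_ ?_
      · rwa [List.getD_eq_getElem?_getD, List.getElem?_append_left hd,
          ← List.getD_eq_getElem?_getD]
      · rwa [List.take_append_of_le_length (le_of_lt hd)]
      · rwa [List.take_append_of_le_length (le_of_lt hd)]

lemma Realized.mono_take {L : List (ℕ × ℕ × ℕ)} {P : List ℕ} {s d : ℕ}
    (h : Realized (L.take s) P) (hsd : s ≤ d) : Realized (L.take d) P :=
  h.mono (List.take_prefix_take_left hsd)

lemma exists_max : ∀ (I : List ℕ), I ≠ [] → ∃ m ∈ I, ∀ a ∈ I, a ≤ m := by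
  intro I
  induction I with
  | nil => simp
  | cons a I ih =>
      intro _
      rcases eq_or_ne I [] with rfl | hne
      · exact ⟨a, by simp, by simp⟩
      · obtain ⟨m, hm, hmax⟩ := ih hne
        rcases le_total a m with h' | h'
        · refine ⟨m, by simp [hm], ?_⟩
          intro b hb
          rcases List.mem_cons.mp hb with rfl | hb'
          · exact h'
          · exact hmax _ hb' 
        · refine ⟨a, by simp, ?_⟩
          intro b hb
          rcases List.mem_cons.mp hb with rfl | hb'
          · exact le_rfl
          · exact le_trans (hmax _ hb') h'

lemma getD_take_eq (P : List ℕ) (t m : ℕ) (h1 : t < m) (h2 : t < P.length) :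
    (P.take m).getD t 0 = P.getD t 0 := by
  rw [List.getD_eq_getElem _ _ (by simp; omega), List.getD_eq_getElem _ _ h2,
    List.getElem_take]

lemma getD_drop_eq (P : List ℕ) (x s : ℕ) (h : x + s < P.length) :
    (P.drop x).getD s 0 = P.getD (x + s) 0 := by
  rw [List.getD_eq_getElem _ _ (by simp; omega), List.getD_eq_getElem _ _ h,
    List.getElem_drop]

lemma getD_mem (P : List ℕ) (t : ℕ) (h : t < P.length) : P.getD t 0 ∈ P := by
  rw [List.getD_eq_getElem _ _ h]; exact List.getElem_mem _

lemma getD_nodup_ne (P : List ℕ) (hnd : P.Nodup) (s t : ℕ) (hs : s < P.length)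
    (ht : t < P.length) (hst : s ≠ t) : P.getD s 0 ≠ P.getD t 0 := by
  rw [List.getD_eq_getElem _ _ hs, List.getD_eq_getElem _ _ ht]
  simp [hnd.getElem_inj_iff, hst]

lemma interior_max (P : List ℕ) (hk : 3 ≤ P.length) :
    ∃ x, 1 ≤ x ∧ x ≤ P.length - 2 ∧
      ∀ t, 1 ≤ t → t ≤ P.length - 2 → P.getD t 0 ≤ P.getD x 0 := by
  have hIlen : ((P.drop 1).dropLast).length = P.length - 2 := by simp; omega
  have hIget : ∀ s, s < P.length - 2 → ((P.drop 1).dropLast).getD s 0 = P.getD (s + 1) 0 := by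
    intro s h
    rw [List.getD_eq_getElem _ _ (by omega), List.getElem_dropLast, List.getElem_drop,
      List.getD_eq_getElem _ _ (by omega)]
    congr 1
    omega
  obtain ⟨m, hm, hmax⟩ := exists_max ((P.drop 1).dropLast) (by
    intro h
    rw [h] at hIlen
    simp at hIlen
    omega)
  obtain ⟨s, hs, hsm⟩ := List.getElem_of_mem hm
  have hs' : s < P.length - 2 := by omega
  have hxm : P.getD (s + 1) 0 = m := by
    rw [← hIget s hs', List.getD_eq_getElem _ _ hs, hsm]
  refine ⟨s + 1, by omega, by omega, ?_⟩
  intro t ht1 ht2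
  rw [hxm]
  have h1 : P.getD t 0 = ((P.drop 1).dropLast).getD (t - 1) 0 := by
    rw [hIget (t - 1) (by omega)]
    congr 1
    omega
  rw [h1]
  exact hmax _ (getD_mem _ _ (by omega))


lemma pos_le_N (n a b : ℕ) (ha : a < n) (hb : b < n) :
    a * (n * n) + (b * n + n) ≤ n * (n * n) := by
  have := pos_lt_N n a b (n - 1) ha hb (by omega)
  omega

lemma sub_one_mul_add (m n : ℕ) (h : 1 ≤ m) : (m - 1) * n + n = m * n := by
  rw [← Nat.succ_mul, Nat.succ_eq_add_one, Nat.sub_add_cancel h]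

lemma valley_realized (n : ℕ) : ∀ (K : ℕ) (P : List ℕ), P.length ≤ K → P.Nodup →
    (∀ v ∈ P, 1 ≤ v ∧ v ≤ n) → 2 ≤ P.length →
    (∀ t, 1 ≤ t → t ≤ P.length - 2 →
      P.getD t 0 < P.getD 0 0 ∧ P.getD t 0 < P.getD (P.length - 1) 0) →
    Realized ((T3 n).take
      ((P.getD 0 0 - 1) * (n * n) + ((P.getD (P.length - 1) 0 - 1) * n + n))) P := by
  intro K
  induction K with
  | zero => intro P h _ _ hk _; omega
  | succ K ih =>
    intro P hPK hnd hb hk hval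
    rcases Nat.lt_or_ge P.length 3 with h3 | h3
    · exact .base _ _ (by omega)
    have hN := Tijk_length n
    have hT3 := T3_length n
    obtain ⟨x, hx1, hx2, hmax⟩ := interior_max P h3
    set i := P.getD 0 0 with hidef
    set j := P.getD (P.length - 1) 0 with hjdef
    set m := P.getD x 0 with hmdef
    have hi := hb i (getD_mem _ _ (by omega))
    have hj := hb j (getD_mem _ _ (by omega))
    have hm := hb m (getD_mem _ _ (by omega))
    have hmi : m < i := (hval x hx1 hx2).1
    have hmj : m < j := (hval x hx1 hx2).2
    have hn1 : 1 ≤ n := le_trans hi.1 hi.2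
    have hs0N : (i - 1) * (n * n) + ((j - 1) * n + n) ≤ n * (n * n) :=
      pos_le_N n (i - 1) (j - 1) (by omega) (by omega)
    have hds0 : (i - 1) * (n * n) + ((j - 1) * n + (m - 1))
        < (i - 1) * (n * n) + ((j - 1) * n + n) := by omega
    have hlen_take : ((T3 n).take ((i - 1) * (n * n) + ((j - 1) * n + n))).length
        = (i - 1) * (n * n) + ((j - 1) * n + n) := by
      rw [List.length_take, hT3]; omega
    have hs1d : (i - 1) * (n * n) + ((m - 1) * n + n)
        ≤ (i - 1) * (n * n) + ((j - 1) * n + (m - 1)) := by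
      have e1 : (m - 1) * n + n = m * n := sub_one_mul_add m n hm.1
      have e2 : m * n ≤ (j - 1) * n := Nat.mul_le_mul_right n (by omega)
      omega
    have hs2d : (m - 1) * (n * n) + ((j - 1) * n + n)
        ≤ (i - 1) * (n * n) + ((j - 1) * n + (m - 1)) := by
      have e1 : (m - 1) * (n * n) + n * n = m * (n * n) := sub_one_mul_add m (n * n) hm.1
      have e2 : m * (n * n) ≤ (i - 1) * (n * n) := Nat.mul_le_mul_right (n * n) (by omega)
      have e3 : n ≤ n * n := Nat.le_mul_of_pos_left n hn1
      omega
    refine Realized.step _ _ ((i - 1) * (n * n) + ((j - 1) * n + (m - 1))) x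
      (by rw [hlen_take]; omega) hx1 hx2 ?_ ?_ ?_
    · rw [List.getD_eq_getElem?_getD, List.getElem?_take, if_pos hds0, ← List.getD_eq_getElem?_getD]
      have := T3_getD n (i - 1) (j - 1) (m - 1) 0 (by omega) (by omega) (by omega) (by omega)
      rw [(by omega : (i - 1) * (n * n) + ((j - 1) * n + (m - 1))
          = 0 * (n * (n * n)) + ((i - 1) * (n * n) + ((j - 1) * n + (m - 1)))), this]
      rw [← hidef, ← hjdef, ← hmdef]
      congr 1 <;> [omega; congr 1 <;> omega]
    · rw [List.take_take, min_eq_left (le_of_lt hds0)]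
      have hP1len : (P.take (x + 1)).length = x + 1 := by
        rw [List.length_take]; omega
      have hP10 : (P.take (x + 1)).getD 0 0 = i := getD_take_eq P 0 (x + 1) (by omega) (by omega)
      have hP1l : (P.take (x + 1)).getD (x + 1 - 1) 0 = m := by
        rw [(by omega : x + 1 - 1 = x)]
        exact getD_take_eq P x (x + 1) (by omega) (by omega)
      have hres := ih (P.take (x + 1)) (by rw [hP1len]; omega)
        (hnd.sublist (List.take_sublist _ _))
        (fun v hv => hb v (List.mem_of_mem_take hv))
        (by rw [hP1len]; omega)
        (by
          intro t ht1 ht2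
          rw [hP1len] at ht2
          have htx : t < x := by omega
          have hgt : (P.take (x + 1)).getD t 0 = P.getD t 0 :=
            getD_take_eq P t (x + 1) (by omega) (by omega)
          rw [hgt, hP10, hP1len, hP1l]
          constructor
          · exact (hval t ht1 (by omega)).1
          · exact lt_of_le_of_ne (hmax t ht1 (by omega))
              (getD_nodup_ne P hnd t x (by omega) (by omega) (by omega)))
      rw [hP1len, hP10, hP1l] at hres
      exact hres.mono_take hs1d
    · rw [List.take_take, min_eq_left (le_of_lt hds0)]
      have hP2len : (P.drop x).length = P.length - x := by simp
      have hP20 : (P.drop x).getD 0 0 = m := by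
        rw [getD_drop_eq P x 0 (by omega), Nat.add_zero, hmdef]
      have hP2l : (P.drop x).getD ((P.drop x).length - 1) 0 = j := by
        rw [hP2len, getD_drop_eq P x (P.length - x - 1) (by omega), hjdef]
        congr 1
        omega
      have hres := ih (P.drop x) (by rw [hP2len]; omega)
        (hnd.sublist (List.drop_sublist _ _))
        (fun v hv => hb v (List.mem_of_mem_drop hv))
        (by rw [hP2len]; omega)
        (by
          intro t ht1 ht2
          rw [hP2len] at ht2
          rw [getD_drop_eq P x t (by omega), hP20, hP2l]
          constructor
          · exact lt_of_le_of_ne (hmax (x + t) (by omega) (by omega))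
              (getD_nodup_ne P hnd (x + t) x (by omega) (by omega) (by omega))
          · exact (hval (x + t) (by omega) (by omega)).2)
      rw [hP20, hP2l] at hres
      exact hres.mono_take hs2d

lemma front_max (P : List ℕ) (hk : 2 ≤ P.length) :
    ∃ x, x ≤ P.length - 2 ∧ ∀ t, t ≤ P.length - 2 → P.getD t 0 ≤ P.getD x 0 := by
  have hIlen : (P.dropLast).length = P.length - 1 := by simp
  have hIget : ∀ s, s < P.length - 1 → (P.dropLast).getD s 0 = P.getD s 0 := by
    intro s h
    rw [List.getD_eq_getElem _ _ (by omega), List.getElem_dropLast,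
      List.getD_eq_getElem _ _ (by omega)]
  obtain ⟨m, hm, hmax⟩ := exists_max (P.dropLast) (by
    intro h
    rw [h] at hIlen
    simp at hIlen
    omega)
  obtain ⟨s, hs, hsm⟩ := List.getElem_of_mem hm
  have hs' : s < P.length - 1 := by omega
  have hxm : P.getD s 0 = m := by rw [← hIget s hs', List.getD_eq_getElem _ _ hs, hsm]
  refine ⟨s, by omega, ?_⟩
  intro t ht
  rw [hxm, ← hIget t (by omega)]
  exact hmax _ (getD_mem _ _ (by omega))

lemma back_max (P : List ℕ) (hk : 2 ≤ P.length) :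
    ∃ x, 1 ≤ x ∧ x ≤ P.length - 1 ∧
      ∀ t, 1 ≤ t → t ≤ P.length - 1 → P.getD t 0 ≤ P.getD x 0 := by
  have hIlen : (P.drop 1).length = P.length - 1 := by simp
  have hIget : ∀ s, s < P.length - 1 → (P.drop 1).getD s 0 = P.getD (1 + s) 0 := by
    intro s h
    rw [getD_drop_eq P 1 s (by omega)]
  obtain ⟨m, hm, hmax⟩ := exists_max (P.drop 1) (by
    intro h
    rw [h] at hIlen
    simp at hIlen
    omega)
  obtain ⟨s, hs, hsm⟩ := List.getElem_of_mem hm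
  have hs' : s < P.length - 1 := by omega
  have hxm : P.getD (1 + s) 0 = m := by rw [← hIget s hs', List.getD_eq_getElem _ _ hs, hsm]
  refine ⟨1 + s, by omega, by omega, ?_⟩
  intro t ht1 ht2
  rw [hxm]
  have : P.getD t 0 = (P.drop 1).getD (t - 1) 0 := by
    rw [hIget (t - 1) (by omega)]
    congr 1
    omega
  rw [this]
  exact hmax _ (getD_mem _ _ (by omega))

lemma full_max (P : List ℕ) (hk : 1 ≤ P.length) :
    ∃ x, x ≤ P.length - 1 ∧ ∀ t, t ≤ P.length - 1 → P.getD t 0 ≤ P.getD x 0 := by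
  obtain ⟨m, hm, hmax⟩ := exists_max P (by
    intro h
    rw [h] at hk
    simp at hk)
  obtain ⟨s, hs, hsm⟩ := List.getElem_of_mem hm
  have hxm : P.getD s 0 = m := by rw [List.getD_eq_getElem _ _ hs, hsm]
  refine ⟨s, by omega, ?_⟩
  intro t ht
  rw [hxm]
  exact hmax _ (getD_mem _ _ (by omega))

lemma maxend_realized (n : ℕ) : ∀ (K : ℕ) (P : List ℕ), P.length ≤ K → P.Nodup →
    (∀ v ∈ P, 1 ≤ v ∧ v ≤ n) → 2 ≤ P.length →
    (∀ t, t < P.length → P.getD t 0 ≤ P.getD (P.length - 1) 0) →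
    Realized ((T3 n).take (n * (n * n) +
      ((P.getD 0 0 - 1) * (n * n) + ((P.getD (P.length - 1) 0 - 1) * n + n)))) P := by
  intro K
  induction K with
  | zero => intro P h _ _ hk _; omega
  | succ K ih =>
    intro P hPK hnd hb hk hmx
    rcases Nat.lt_or_ge P.length 3 with h3 | h3
    · exact .base _ _ (by omega)
    have hN := Tijk_length n
    have hT3 := T3_length n
    obtain ⟨x, hx2, hmax⟩ := front_max P hk
    set i := P.getD 0 0 with hidef
    set j := P.getD (P.length - 1) 0 with hjdef
    set u := P.getD x 0 with hudef
    have hi := hb i (getD_mem _ _ (by omega))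
    have hj := hb j (getD_mem _ _ (by omega))
    have hu := hb u (getD_mem _ _ (by omega))
    have hn1 : 1 ≤ n := le_trans hi.1 hi.2
    have huj : u < j :=
      lt_of_le_of_ne (hmx x (by omega))
        (getD_nodup_ne P hnd x (P.length - 1) (by omega) (by omega) (by omega))
    have hs0N : (i - 1) * (n * n) + ((j - 1) * n + n) ≤ n * (n * n) :=
      pos_le_N n (i - 1) (j - 1) (by omega) (by omega)
    rcases Nat.eq_zero_or_pos x with rfl | hx1
    · -- the head is the largest among all but the last: valley path
      have hres := valley_realized n (K + 1) P hPK hnd hb hk (by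
        intro t ht1 ht2
        constructor
        · exact lt_of_le_of_ne (hmax t (by omega))
            (getD_nodup_ne P hnd t 0 (by omega) (by omega) (by omega))
        · exact lt_of_le_of_ne (hmx t (by omega))
            (getD_nodup_ne P hnd t (P.length - 1) (by omega) (by omega) (by omega)))
      rw [← hidef, ← hjdef] at hres
      exact hres.mono_take (by omega)
    · have hui : u < i ∨ 1 ≤ x := Or.inr hx1
      have hds0 : (i - 1) * (n * n) + ((j - 1) * n + (u - 1))
          < (i - 1) * (n * n) + ((j - 1) * n + n) := by omega
      have hlen_take : ((T3 n).take (n * (n * n) +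
          ((i - 1) * (n * n) + ((j - 1) * n + n)))).length
          = n * (n * n) + ((i - 1) * (n * n) + ((j - 1) * n + n)) := by
        rw [List.length_take, hT3]; omega
      have hs1d : (i - 1) * (n * n) + ((u - 1) * n + n)
          ≤ (i - 1) * (n * n) + ((j - 1) * n + (u - 1)) := by
        have e1 : (u - 1) * n + n = u * n := sub_one_mul_add u n hu.1
        have e2 : u * n ≤ (j - 1) * n := Nat.mul_le_mul_right n (by omega)
        omega
      refine Realized.step _ _
        (n * (n * n) + ((i - 1) * (n * n) + ((j - 1) * n + (u - 1)))) x
        (by rw [hlen_take]; omega) hx1 (by omega) ?_ ?_ ?_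
      · rw [List.getD_eq_getElem?_getD, List.getElem?_take, if_pos (by omega),
          ← List.getD_eq_getElem?_getD]
        have := T3_getD n (i - 1) (j - 1) (u - 1) 1 (by omega) (by omega) (by omega) (by omega)
        rw [(by omega : n * (n * n) + ((i - 1) * (n * n) + ((j - 1) * n + (u - 1)))
            = 1 * (n * (n * n)) + ((i - 1) * (n * n) + ((j - 1) * n + (u - 1)))), this]
        rw [← hidef, ← hjdef, ← hudef]
        congr 1 <;> [omega; congr 1 <;> omega]
      · rw [List.take_take, min_eq_left (by omega)]
        have hP1len : (P.take (x + 1)).length = x + 1 := by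
          rw [List.length_take]; omega
        have hP10 : (P.take (x + 1)).getD 0 0 = i :=
          getD_take_eq P 0 (x + 1) (by omega) (by omega)
        have hP1l : (P.take (x + 1)).getD (x + 1 - 1) 0 = u := by
          rw [(by omega : x + 1 - 1 = x)]
          exact getD_take_eq P x (x + 1) (by omega) (by omega)
        have hres := ih (P.take (x + 1)) (by rw [hP1len]; omega)
          (hnd.sublist (List.take_sublist _ _))
          (fun v hv => hb v (List.mem_of_mem_take hv))
          (by rw [hP1len]; omega)
          (by
            intro t ht
            rw [hP1len] at ht
            rw [hP1len, getD_take_eq P t (x + 1) (by omega) (by omega), hP1l]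
            exact hmax t (by omega))
        rw [hP1len, hP10, hP1l] at hres
        exact hres.mono_take (by omega)
      · rw [List.take_take, min_eq_left (by omega)]
        have hP2len : (P.drop x).length = P.length - x := by simp
        have hP20 : (P.drop x).getD 0 0 = u := by
          rw [getD_drop_eq P x 0 (by omega), Nat.add_zero, hudef]
        have hP2l : (P.drop x).getD ((P.drop x).length - 1) 0 = j := by
          rw [hP2len, getD_drop_eq P x (P.length - x - 1) (by omega), hjdef]
          congr 1
          omega
        have hres := valley_realized n (K + 1) (P.drop x) (by rw [hP2len]; omega)
          (hnd.sublist (List.drop_sublist _ _))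
          (fun v hv => hb v (List.mem_of_mem_drop hv))
          (by rw [hP2len]; omega)
          (by
            intro t ht1 ht2
            rw [hP2len] at ht2
            rw [getD_drop_eq P x t (by omega), hP20, hP2l]
            constructor
            · exact lt_of_le_of_ne (hmax (x + t) (by omega))
                (getD_nodup_ne P hnd (x + t) x (by omega) (by omega) (by omega))
            · exact lt_of_le_of_ne (hmx (x + t) (by omega))
                (getD_nodup_ne P hnd (x + t) (P.length - 1) (by omega) (by omega) (by omega)))
        rw [hP20, hP2l] at hres
        have hposuj : (u - 1) * (n * n) + ((j - 1) * n + n) ≤ n * (n * n) :=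
          pos_le_N n (u - 1) (j - 1) (by omega) (by omega)
        exact hres.mono_take (by omega)

lemma maxfront_realized (n : ℕ) : ∀ (K : ℕ) (P : List ℕ), P.length ≤ K → P.Nodup →
    (∀ v ∈ P, 1 ≤ v ∧ v ≤ n) → 2 ≤ P.length →
    (∀ t, t < P.length → P.getD t 0 ≤ P.getD 0 0) →
    Realized ((T3 n).take (n * (n * n) +
      ((P.getD 0 0 - 1) * (n * n) + ((P.getD (P.length - 1) 0 - 1) * n + n)))) P := by
  intro K
  induction K with
  | zero => intro P h _ _ hk _; omega
  | succ K ih =>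
    intro P hPK hnd hb hk hmx
    rcases Nat.lt_or_ge P.length 3 with h3 | h3
    · exact .base _ _ (by omega)
    have hN := Tijk_length n
    have hT3 := T3_length n
    obtain ⟨x, hx1, hx2, hmax⟩ := back_max P hk
    set i := P.getD 0 0 with hidef
    set j := P.getD (P.length - 1) 0 with hjdef
    set u := P.getD x 0 with hudef
    have hi := hb i (getD_mem _ _ (by omega))
    have hj := hb j (getD_mem _ _ (by omega))
    have hu := hb u (getD_mem _ _ (by omega))
    have hn1 : 1 ≤ n := le_trans hi.1 hi.2
    have hui : u < i :=
      lt_of_le_of_ne (hmx x (by omega))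
        (getD_nodup_ne P hnd x 0 (by omega) (by omega) (by omega))
    have hs0N : (i - 1) * (n * n) + ((j - 1) * n + n) ≤ n * (n * n) :=
      pos_le_N n (i - 1) (j - 1) (by omega) (by omega)
    rcases Nat.lt_or_ge x (P.length - 1) with hxlt | hxge
    case inr =>
      -- x = P.length - 1, so u = j and the path is a valley
      have hxj : x = P.length - 1 := by omega
      have hres := valley_realized n (K + 1) P hPK hnd hb hk (by
        intro t ht1 ht2
        constructor
        · exact lt_of_le_of_ne (hmx t (by omega))
            (getD_nodup_ne P hnd t 0 (by omega) (by omega) (by omega))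
        · refine lt_of_le_of_ne ?_
            (getD_nodup_ne P hnd t (P.length - 1) (by omega) (by omega) (by omega))
          have := hmax t (by omega) (by omega)
          rwa [hudef, hxj] at this)
      rw [← hidef, ← hjdef] at hres
      exact hres.mono_take (by omega)
    case inl =>
      have hds0 : (i - 1) * (n * n) + ((j - 1) * n + (u - 1))
          < (i - 1) * (n * n) + ((j - 1) * n + n) := by omega
      have hlen_take : ((T3 n).take (n * (n * n) +
          ((i - 1) * (n * n) + ((j - 1) * n + n)))).length
          = n * (n * n) + ((i - 1) * (n * n) + ((j - 1) * n + n)) := by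
        rw [List.length_take, hT3]; omega
      have hs2d : (u - 1) * (n * n) + ((j - 1) * n + n)
          ≤ (i - 1) * (n * n) + ((j - 1) * n + (u - 1)) := by
        have e1 : (u - 1) * (n * n) + n * n = u * (n * n) := sub_one_mul_add u (n * n) hu.1
        have e2 : u * (n * n) ≤ (i - 1) * (n * n) := Nat.mul_le_mul_right (n * n) (by omega)
        have e3 : n ≤ n * n := Nat.le_mul_of_pos_left n hn1
        omega
      refine Realized.step _ _
        (n * (n * n) + ((i - 1) * (n * n) + ((j - 1) * n + (u - 1)))) x
        (by rw [hlen_take]; omega) hx1 (by omega) ?_ ?_ ?_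
      · rw [List.getD_eq_getElem?_getD, List.getElem?_take, if_pos (by omega),
          ← List.getD_eq_getElem?_getD]
        have := T3_getD n (i - 1) (j - 1) (u - 1) 1 (by omega) (by omega) (by omega) (by omega)
        rw [(by omega : n * (n * n) + ((i - 1) * (n * n) + ((j - 1) * n + (u - 1)))
            = 1 * (n * (n * n)) + ((i - 1) * (n * n) + ((j - 1) * n + (u - 1)))), this]
        rw [← hidef, ← hjdef, ← hudef]
        congr 1 <;> [omega; congr 1 <;> omega]
      · rw [List.take_take, min_eq_left (by omega)]
        have hP1len : (P.take (x + 1)).length = x + 1 := by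
          rw [List.length_take]; omega
        have hP10 : (P.take (x + 1)).getD 0 0 = i :=
          getD_take_eq P 0 (x + 1) (by omega) (by omega)
        have hP1l : (P.take (x + 1)).getD (x + 1 - 1) 0 = u := by
          rw [(by omega : x + 1 - 1 = x)]
          exact getD_take_eq P x (x + 1) (by omega) (by omega)
        have hres := valley_realized n (K + 1) (P.take (x + 1)) (by rw [hP1len]; omega)
          (hnd.sublist (List.take_sublist _ _))
          (fun v hv => hb v (List.mem_of_mem_take hv))
          (by rw [hP1len]; omega)
          (by
            intro t ht1 ht2
            rw [hP1len] at ht2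
            rw [hP1len, getD_take_eq P t (x + 1) (by omega) (by omega), hP10, hP1l]
            constructor
            · exact lt_of_le_of_ne (hmx t (by omega))
                (getD_nodup_ne P hnd t 0 (by omega) (by omega) (by omega))
            · exact lt_of_le_of_ne (hmax t (by omega) (by omega))
                (getD_nodup_ne P hnd t x (by omega) (by omega) (by omega)))
        rw [hP1len, hP10, hP1l] at hres
        have hposiu : (i - 1) * (n * n) + ((u - 1) * n + n) ≤ n * (n * n) :=
          pos_le_N n (i - 1) (u - 1) (by omega) (by omega)
        exact hres.mono_take (by omega)
      · rw [List.take_take, min_eq_left (by omega)]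
        have hP2len : (P.drop x).length = P.length - x := by simp
        have hP20 : (P.drop x).getD 0 0 = u := by
          rw [getD_drop_eq P x 0 (by omega), Nat.add_zero, hudef]
        have hP2l : (P.drop x).getD ((P.drop x).length - 1) 0 = j := by
          rw [hP2len, getD_drop_eq P x (P.length - x - 1) (by omega), hjdef]
          congr 1
          omega
        have hres := ih (P.drop x) (by rw [hP2len]; omega)
          (hnd.sublist (List.drop_sublist _ _))
          (fun v hv => hb v (List.mem_of_mem_drop hv))
          (by rw [hP2len]; omega)
          (by
            intro t ht
            rw [hP2len] at ht
            rw [getD_drop_eq P x t (by omega), hP20]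
            rcases Nat.eq_zero_or_pos t with rfl | ht1
            · rw [Nat.add_zero, hudef]
            · exact hmax (x + t) (by omega) (by omega))
        rw [hP20, hP2l] at hres
        exact hres.mono_take (by omega)

lemma all_realized (n : ℕ) (P : List ℕ) (hnd : P.Nodup)
    (hb : ∀ v ∈ P, 1 ≤ v ∧ v ≤ n) (hk : 2 ≤ P.length) : Realized (T3 n) P := by
  rcases Nat.lt_or_ge P.length 3 with h3 | h3
  · exact .base _ _ (by omega)
  have hN := Tijk_length n
  have hT3 := T3_length n
  have htake3 : (T3 n).take (3 * (n * (n * n))) = T3 n := by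
    rw [← hT3, List.take_length]
  obtain ⟨x, hx2, hmax⟩ := full_max P (by omega)
  set i := P.getD 0 0 with hidef
  set j := P.getD (P.length - 1) 0 with hjdef
  set m := P.getD x 0 with hmdef
  have hi := hb i (getD_mem _ _ (by omega))
  have hj := hb j (getD_mem _ _ (by omega))
  have hm := hb m (getD_mem _ _ (by omega))
  have hn1 : 1 ≤ n := le_trans hi.1 hi.2
  have hs0N : (i - 1) * (n * n) + ((j - 1) * n + n) ≤ n * (n * n) :=
    pos_le_N n (i - 1) (j - 1) (by omega) (by omega)
  rcases Nat.eq_zero_or_pos x with rfl | hx1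
  · -- max at the front
    have hres := maxfront_realized n P.length P le_rfl hnd hb (by omega)
      (fun t ht => hmax t (by omega))
    rw [← hidef, ← hjdef] at hres
    rw [← htake3]
    exact hres.mono_take (by omega)
  rcases Nat.eq_or_lt_of_le (by omega : x ≤ P.length - 1) with hxl | hxlt
  · -- max at the end
    have hres := maxend_realized n P.length P le_rfl hnd hb (by omega)
      (by
        intro t ht
        have := hmax t (by omega)
        rwa [hmdef, hxl] at this)
    rw [← hidef, ← hjdef] at hres
    rw [← htake3]
    exact hres.mono_take (by omega)
  · -- max in the interior: use the third pass
    refine Realized.step _ _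
      (2 * (n * (n * n)) + ((i - 1) * (n * n) + ((j - 1) * n + (m - 1)))) x
      (by rw [hT3]; have := pos_lt_N n (i - 1) (j - 1) (m - 1) (by omega) (by omega) (by omega); omega)
      hx1 (by omega) ?_ ?_ ?_
    · have := T3_getD n (i - 1) (j - 1) (m - 1) 2 (by omega) (by omega) (by omega) (by omega)
      rw [this, ← hidef, ← hjdef, ← hmdef]
      congr 1 <;> [omega; congr 1 <;> omega]
    · have hP1len : (P.take (x + 1)).length = x + 1 := by
        rw [List.length_take]; omega
      have hP10 : (P.take (x + 1)).getD 0 0 = i :=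
        getD_take_eq P 0 (x + 1) (by omega) (by omega)
      have hP1l : (P.take (x + 1)).getD (x + 1 - 1) 0 = m := by
        rw [(by omega : x + 1 - 1 = x)]
        exact getD_take_eq P x (x + 1) (by omega) (by omega)
      have hres := maxend_realized n (x + 1) (P.take (x + 1)) (by rw [hP1len])
        (hnd.sublist (List.take_sublist _ _))
        (fun v hv => hb v (List.mem_of_mem_take hv))
        (by rw [hP1len]; omega)
        (by
          intro t ht
          rw [hP1len] at ht
          rw [hP1len, getD_take_eq P t (x + 1) (by omega) (by omega), hP1l]
          exact hmax t (by omega))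
      rw [hP1len, hP10, hP1l] at hres
      have hposim : (i - 1) * (n * n) + ((m - 1) * n + n) ≤ n * (n * n) :=
        pos_le_N n (i - 1) (m - 1) (by omega) (by omega)
      exact hres.mono_take (by omega)
    · have hP2len : (P.drop x).length = P.length - x := by simp
      have hP20 : (P.drop x).getD 0 0 = m := by
        rw [getD_drop_eq P x 0 (by omega), Nat.add_zero, hmdef]
      have hP2l : (P.drop x).getD ((P.drop x).length - 1) 0 = j := by
        rw [hP2len, getD_drop_eq P x (P.length - x - 1) (by omega), hjdef]
        congr 1
        omega
      have hres := maxfront_realized n (P.length - x) (P.drop x) (by rw [hP2len])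
        (hnd.sublist (List.drop_sublist _ _))
        (fun v hv => hb v (List.mem_of_mem_drop hv))
        (by rw [hP2len]; omega)
        (by
          intro t ht
          rw [hP2len] at ht
          rw [getD_drop_eq P x t (by omega), hP20]
          exact hmax (x + t) (by omega))
      rw [hP20, hP2l] at hres
      have hposmj : (m - 1) * (n * n) + ((j - 1) * n + n) ≤ n * (n * n) :=
        pos_le_N n (m - 1) (j - 1) (by omega) (by omega)
      exact hres.mono_take (by omega)

lemma pathWeight_nil (W : ℕ → ℕ → WithTop ℤ) : pathWeight W [] = 0 := by
  simp [pathWeight]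

lemma pathWeight_single (W : ℕ → ℕ → WithTop ℤ) (a : ℕ) : pathWeight W [a] = 0 := by
  simp [pathWeight]

lemma pathWeight_cons_cons (W : ℕ → ℕ → WithTop ℤ) (a b : ℕ) (L : List ℕ) :
    pathWeight W (a :: b :: L) = W a b + pathWeight W (b :: L) := by
  simp [pathWeight]

lemma pathWeight_pair (W : ℕ → ℕ → WithTop ℤ) (a b : ℕ) :
    pathWeight W [a, b] = W a b := by
  simp [pathWeight]

lemma pathWeight_append (W : ℕ → ℕ → WithTop ℤ) :
    ∀ (X : List ℕ) (v : ℕ) (Y : List ℕ),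
      pathWeight W (X ++ v :: Y) = pathWeight W (X ++ [v]) + pathWeight W (v :: Y) := by
  intro X
  induction X with
  | nil =>
      intro v Y
      simp [pathWeight_single]
  | cons a X ih =>
      intro v Y
      cases X with
      | nil =>
          simp only [List.nil_append, List.cons_append, pathWeight_cons_cons,
            pathWeight_single, pathWeight_pair]
          rw [add_zero]
      | cons c X' =>
          simp only [List.cons_append, pathWeight_cons_cons] at *
          rw [ih v Y, add_assoc]

lemma getD_zero_head? (L : List ℕ) : L.getD 0 0 = L.head?.getD 0 := by
  rw [List.getD_eq_getElem?_getD, List.head?_eq_getElem?]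

lemma getD_last_getLast? (L : List ℕ) : L.getD (L.length - 1) 0 = L.getLast?.getD 0 := by
  rw [List.getD_eq_getElem?_getD, List.getLast?_eq_getElem?]

lemma getLast?_append_ne (l1 l2 : List ℕ) (h : l2 ≠ []) :
    (l1 ++ l2).getLast? = l2.getLast? := by
  rw [List.getLast?_append]
  obtain ⟨a, ha⟩ := List.getLast?_isSome.mpr h |> Option.isSome_iff_exists.mp
  rw [ha]
  rfl

lemma relaxStep_eq (A : ℕ → ℕ → WithTop ℤ) (i j k : ℕ) :
    relaxStep A (i, j, k) i j = min (A i j) (A i k + A k j) := by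
  simp [relaxStep]

lemma relaxStep_le (A : ℕ → ℕ → WithTop ℤ) (t : ℕ × ℕ × ℕ) (i j : ℕ) :
    relaxStep A t i j ≤ A i j := by
  unfold relaxStep
  split
  · exact min_le_left _ _
  · exact le_rfl

lemma relaxAll_le : ∀ (T : List (ℕ × ℕ × ℕ)) (A : ℕ → ℕ → WithTop ℤ) (i j : ℕ),
    relaxAll A T i j ≤ A i j := by
  intro T
  induction T with
  | nil => intro A i j; exact le_rfl
  | cons t T ih =>
      intro A i j
      exact le_trans (ih (relaxStep A t) i j) (relaxStep_le A t i j)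

lemma realized_le (A : ℕ → ℕ → WithTop ℤ) (hA0 : ∀ i, A i i = 0)
    {T : List (ℕ × ℕ × ℕ)} {P : List ℕ} (h : Realized T P) :
    1 ≤ P.length →
      relaxAll A T (P.getD 0 0) (P.getD (P.length - 1) 0) ≤ pathWeight A P := by
  induction h with
  | base T P hlen =>
      intro h1
      match P, hlen, h1 with
      | [a], _, _ =>
          simp only [List.length_singleton, Nat.sub_self, List.getD_cons_zero,
            pathWeight_single]
          exact le_trans (relaxAll_le T A a a) (le_of_eq (hA0 a))
      | [a, b], _, _ =>
          simp only [List.length_cons, List.length_singleton, pathWeight_pair]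
          exact relaxAll_le T A _ _
  | step T P d x hd hx1 hx2 ht h1 h2 ih1 ih2 =>
      intro hlen1
      have hlen3 : 3 ≤ P.length := by
        by_contra hcon
        push_neg at hcon
        omega
      have hP1len : (P.take (x + 1)).length = x + 1 := by
        rw [List.length_take]; omega
      have hP2len : (P.drop x).length = P.length - x := by simp
      have hP10 : (P.take (x + 1)).getD 0 0 = P.getD 0 0 :=
        getD_take_eq P 0 (x + 1) (by omega) (by omega)
      have hP1l : (P.take (x + 1)).getD ((P.take (x + 1)).length - 1) 0 = P.getD x 0 := by
        rw [hP1len, (by omega : x + 1 - 1 = x)]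
        exact getD_take_eq P x (x + 1) (by omega) (by omega)
      have hP20 : (P.drop x).getD 0 0 = P.getD x 0 := by
        rw [getD_drop_eq P x 0 (by omega), Nat.add_zero]
      have hP2l : (P.drop x).getD ((P.drop x).length - 1) 0 = P.getD (P.length - 1) 0 := by
        rw [hP2len, getD_drop_eq P x (P.length - x - 1) (by omega)]
        congr 1
        omega
      have ihA := ih1 (by omega)
      have ihB := ih2 (by omega)
      rw [hP10, hP1l] at ihA
      rw [hP20, hP2l] at ihB
      -- split the weight of P
      have hsplitP : P = P.take x ++ P.getD x 0 :: P.drop (x + 1) := by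
        conv_lhs => rw [← List.take_append_drop x P]
        rw [List.drop_eq_getElem_cons (by omega : x < P.length),
          List.getD_eq_getElem _ _ (by omega : x < P.length)]
      have htake_succ : P.take (x + 1) = P.take x ++ [P.getD x 0] := by
        rw [List.take_succ, List.getD_eq_getElem?_getD]
        cases hx : P[x]? with
        | none =>
            rw [List.getElem?_eq_none_iff] at hx
            omega
        | some v => simp
      have hdropx : P.drop x = P.getD x 0 :: P.drop (x + 1) := by
        rw [List.drop_eq_getElem_cons (by omega : x < P.length),
          List.getD_eq_getElem _ _ (by omega : x < P.length)]
      have hw : pathWeight A P = pathWeight A (P.take (x + 1)) + pathWeight A (P.drop x) := by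
        conv_lhs => rw [hsplitP]
        rw [pathWeight_append, htake_succ, hdropx]
      -- relate relaxAll at d+1
      have hTd : T.take (d + 1) = T.take d ++ [T.getD d default] := by
        rw [List.take_succ, List.getElem?_eq_getElem hd, List.getD_eq_getElem _ _ hd]
        rfl
      have hstep : relaxAll A (T.take (d + 1)) (P.getD 0 0) (P.getD (P.length - 1) 0)
          ≤ pathWeight A P := by
        rw [hTd]
        unfold relaxAll
        rw [List.foldl_append, List.foldl_cons, List.foldl_nil, ht, relaxStep_eq]
        rw [hw]
        exact le_trans (min_le_right _ _) (add_le_add ihA ihB)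
      have hTfull : relaxAll A T (P.getD 0 0) (P.getD (P.length - 1) 0)
          ≤ relaxAll A (T.take (d + 1)) (P.getD 0 0) (P.getD (P.length - 1) 0) := by
        conv_lhs => rw [← List.take_append_drop (d + 1) T]
        unfold relaxAll
        rw [List.foldl_append]
        exact relaxAll_le _ _ _ _
      exact le_trans hTfull hstep

lemma exists_dup : ∀ (P : List ℕ), ¬ P.Nodup →
    ∃ X v Y Z, P = X ++ v :: (Y ++ v :: Z) := by
  intro P
  induction P with
  | nil => intro h; simp at h
  | cons a P ih =>
      intro h
      rw [List.nodup_cons] at h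
      push_neg at h
      by_cases ha : a ∈ P
      · obtain ⟨Y, Z, rfl⟩ := List.append_of_mem ha
        exact ⟨[], a, Y, Z, by simp⟩
      · obtain ⟨X, v, Y, Z, rfl⟩ := ih (h ha)
        exact ⟨a :: X, v, Y, Z, by simp⟩

lemma dedup_path (n : ℕ) (A : ℕ → ℕ → WithTop ℤ) (hNeg : NoNegCycle n A) :
    ∀ (K : ℕ) (P : List ℕ), P.length ≤ K → P ≠ [] → (∀ v ∈ P, 1 ≤ v ∧ v ≤ n) →
      ∃ Q : List ℕ, Q.Nodup ∧ Q ≠ [] ∧ (∀ v ∈ Q, 1 ≤ v ∧ v ≤ n) ∧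
        Q.head? = P.head? ∧ Q.getLast? = P.getLast? ∧
        pathWeight A Q ≤ pathWeight A P := by
  intro K
  induction K with
  | zero =>
      intro P hPK hne _
      cases P
      · exact absurd rfl hne
      · simp at hPK
  | succ K ih =>
      intro P hPK hne hb
      by_cases hnd : P.Nodup
      · exact ⟨P, hnd, hne, hb, rfl, rfl, le_rfl⟩
      · obtain ⟨X, v, Y, Z, rfl⟩ := exists_dup P hnd
        set P' := X ++ v :: Z with hP'def
        -- the removed cycle
        have hCw : 0 ≤ pathWeight A ((v :: Y) ++ [v]) := by
          apply hNeg ((v :: Y) ++ [v])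
            (by simp only [List.length_append, List.length_cons, List.length_nil]; omega)
          · intro w hw
            apply hb
            simp only [List.mem_append, List.mem_cons] at hw ⊢
            tauto
          · rw [getD_zero_head?, getD_last_getLast?, List.getLast?_concat]
            rfl
        have hw1 : pathWeight A (X ++ v :: (Y ++ v :: Z))
            = pathWeight A (X ++ [v]) + pathWeight A (v :: (Y ++ v :: Z)) :=
          pathWeight_append A X v (Y ++ v :: Z)
        have hw2 : pathWeight A (v :: (Y ++ v :: Z))
            = pathWeight A ((v :: Y) ++ [v]) + pathWeight A (v :: Z) := by
          have : v :: (Y ++ v :: Z) = (v :: Y) ++ v :: Z := by simp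
          rw [this, pathWeight_append A (v :: Y) v Z]
        have hw3 : pathWeight A P' = pathWeight A (X ++ [v]) + pathWeight A (v :: Z) :=
          pathWeight_append A X v Z
        have hle : pathWeight A P' ≤ pathWeight A (X ++ v :: (Y ++ v :: Z)) := by
          rw [hw1, hw2, hw3]
          calc pathWeight A (X ++ [v]) + pathWeight A (v :: Z)
              = pathWeight A (X ++ [v]) + (0 + pathWeight A (v :: Z)) := by rw [zero_add]
            _ ≤ pathWeight A (X ++ [v])
                + (pathWeight A ((v :: Y) ++ [v]) + pathWeight A (v :: Z)) :=
                add_le_add_right (add_le_add_left hCw _) _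
        have hhead : P'.head? = (X ++ v :: (Y ++ v :: Z)).head? := by
          cases X with
          | nil => rfl
          | cons a X' => rfl
        have hlast : P'.getLast? = (X ++ v :: (Y ++ v :: Z)).getLast? := by
          rw [hP'def, getLast?_append_ne X (v :: Z) (by simp)]
          have : X ++ v :: (Y ++ v :: Z) = (X ++ v :: Y) ++ (v :: Z) := by simp
          rw [this, getLast?_append_ne _ (v :: Z) (by simp)]
        obtain ⟨Q, hQ1, hQ2, hQ3, hQ4, hQ5, hQ6⟩ := ih P'
          (by
            rw [hP'def]
            simp only [List.length_append, List.length_cons] at hPK ⊢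
            omega)
          (by simp [hP'def])
          (by
            intro w hw
            apply hb
            simp only [hP'def, List.mem_append, List.mem_cons] at hw ⊢
            tauto)
        exact ⟨Q, hQ1, hQ2, hQ3, by rw [hQ4, hhead], by rw [hQ5, hlast],
          le_trans hQ6 hle⟩

lemma path_concat (A : ℕ → ℕ → WithTop ℤ) (P1 P2 : List ℕ) (h1 : P1 ≠ []) (h2 : P2 ≠ [])
    (hk : P1.getD (P1.length - 1) 0 = P2.getD 0 0) :
    pathWeight A (P1 ++ P2.tail) = pathWeight A P1 + pathWeight A P2 ∧
    (P1 ++ P2.tail).head? = P1.head? ∧ (P1 ++ P2.tail).getLast? = P2.getLast? := by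
  obtain ⟨k, hkdef⟩ : ∃ k, P2.head h2 = k := ⟨_, rfl⟩
  have hP2 : P2 = k :: P2.tail := by rw [← hkdef]; exact (List.cons_head_tail h2).symm
  have hlast : P1.getLast h1 = k := by
    have e1 : P1.getD (P1.length - 1) 0 = P1.getLast h1 := by
      rw [getD_last_getLast?, List.getLast?_eq_getLast h1]
      rfl
    have e2 : P2.getD 0 0 = k := by
      rw [getD_zero_head?, List.head?_eq_head h2, hkdef]
      rfl
    rw [← e1, ← e2, hk]
  have hP1 : P1 = P1.dropLast ++ [k] := by
    rw [← hlast, List.dropLast_append_getLast h1]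
  refine ⟨?_, ?_, ?_⟩
  · conv_lhs => rw [hP1, List.append_assoc, List.singleton_append]
    rw [pathWeight_append A P1.dropLast k P2.tail, ← hP1, ← hP2]
  · rw [List.head?_append, List.head?_eq_head h1]
    rfl
  · cases htl : P2.tail with
    | nil =>
        have hP2k : P2 = [k] := by rw [hP2, htl]
        rw [List.append_nil, hP2k, hP1]
        exact List.getLast?_concat
    | cons b L =>
        rw [← htl, getLast?_append_ne P1 P2.tail (by rw [htl]; simp)]
        conv_rhs => rw [hP2]
        rw [(by rfl : k :: P2.tail = [k] ++ P2.tail),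
          getLast?_append_ne [k] P2.tail (by rw [htl]; simp)]

lemma relax_mem (n : ℕ) (A : ℕ → ℕ → WithTop ℤ) :
    ∀ (T : List (ℕ × ℕ × ℕ)), (∀ t ∈ T, 1 ≤ t.2.2 ∧ t.2.2 ≤ n) →
    ∀ B : ℕ → ℕ → WithTop ℤ,
      (∀ i j, 1 ≤ i → i ≤ n → 1 ≤ j → j ≤ n →
        ∃ P : List ℕ, P ≠ [] ∧ (∀ v ∈ P, 1 ≤ v ∧ v ≤ n) ∧
          P.getD 0 0 = i ∧ P.getD (P.length - 1) 0 = j ∧ pathWeight A P = B i j) →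
    ∀ i j, 1 ≤ i → i ≤ n → 1 ≤ j → j ≤ n →
      ∃ P : List ℕ, P ≠ [] ∧ (∀ v ∈ P, 1 ≤ v ∧ v ≤ n) ∧
        P.getD 0 0 = i ∧ P.getD (P.length - 1) 0 = j ∧
        pathWeight A P = relaxAll B T i j := by
  intro T
  induction T with
  | nil => intro _ B hinv i j hi1 hi2 hj1 hj2; exact hinv i j hi1 hi2 hj1 hj2
  | cons t T ih =>
      intro hT B hinv
      have hstep : relaxAll B (t :: T) = relaxAll (relaxStep B t) T := rfl
      rw [hstep]
      apply ih (fun s hs => hT s (List.mem_cons_of_mem t hs))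
      intro i j hi1 hi2 hj1 hj2
      by_cases hc : i = t.1 ∧ j = t.2.1
      · have hval : relaxStep B t i j = min (B i j) (B i t.2.2 + B t.2.2 j) := by
          unfold relaxStep
          rw [if_pos hc]
        have hk := hT t (List.mem_cons_self)
        rcases min_choice (B i j) (B i t.2.2 + B t.2.2 j) with hmin | hmin
        · obtain ⟨P, hP1, hP2, hP3, hP4, hP5⟩ := hinv i j hi1 hi2 hj1 hj2
          exact ⟨P, hP1, hP2, hP3, hP4, by rw [hP5, hval, hmin]⟩
        · obtain ⟨P1, hA1, hA2, hA3, hA4, hA5⟩ := hinv i t.2.2 hi1 hi2 hk.1 hk.2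
          obtain ⟨P2, hB1, hB2, hB3, hB4, hB5⟩ := hinv t.2.2 j hk.1 hk.2 hj1 hj2
          obtain ⟨hw, hh, hl⟩ := path_concat A P1 P2 hA1 hB1 (by rw [hA4, hB3])
          refine ⟨P1 ++ P2.tail, by simp [hA1], ?_, ?_, ?_, ?_⟩
          · intro w hw'
            rcases List.mem_append.mp hw' with h | h
            · exact hA2 w h
            · exact hB2 w (List.mem_of_mem_tail h)
          · rw [getD_zero_head?, hh, ← getD_zero_head?, hA3]
          · rw [getD_last_getLast?, hl, ← getD_last_getLast?, hB4]
          · rw [hw, hA5, hB5, hval, hmin]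
      · have hval : relaxStep B t i j = B i j := by
          unfold relaxStep
          rw [if_neg hc]
        obtain ⟨P, hP1, hP2, hP3, hP4, hP5⟩ := hinv i j hi1 hi2 hj1 hj2
        exact ⟨P, hP1, hP2, hP3, hP4, by rw [hP5, hval]⟩

lemma Tijk_mem (n : ℕ) (t : ℕ × ℕ × ℕ) (h : t ∈ Tijk n) :
    (1 ≤ t.1 ∧ t.1 ≤ n) ∧ (1 ≤ t.2.1 ∧ t.2.1 ≤ n) ∧ (1 ≤ t.2.2 ∧ t.2.2 ≤ n) := by
  unfold Tijk at h
  simp only [List.mem_flatMap, List.mem_map, List.mem_range] at h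
  obtain ⟨a, ha, b, hb, c, hc, rfl⟩ := h
  simp only
  omega

/-- Every simple path on `[1,n]` is realized by `(T_ijk(n))³`; consequently three
IJK relaxation passes compute the correct all-pairs shortest path matrix on graphs
with no negative cycles. -/
theorem stmt6 (n : ℕ) :
    (∀ P : List ℕ, ValidPath n P → P.Nodup →
      Realized (Tijk n ++ Tijk n ++ Tijk n) P) ∧
    (∀ A : ℕ → ℕ → WithTop ℤ, (∀ i, A i i = 0) → NoNegCycle n A →
      ∀ i j, 1 ≤ i → i ≤ n → 1 ≤ j → j ≤ n →
        IsLeast {c | ∃ P : List ℕ, P ≠ [] ∧ (∀ v ∈ P, 1 ≤ v ∧ v ≤ n) ∧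
            P.getD 0 0 = i ∧ P.getD (P.length - 1) 0 = j ∧ pathWeight A P = c}
          (relaxAll A (Tijk n ++ Tijk n ++ Tijk n) i j)) := by
  constructor
  · intro P hP hnd
    exact all_realized n P hnd hP.2 hP.1
  · intro A hA0 hNeg i j hi1 hi2 hj1 hj2
    constructor
    · -- membership: the computed value is the weight of some path
      have hTb : ∀ t ∈ Tijk n ++ Tijk n ++ Tijk n, 1 ≤ t.2.2 ∧ t.2.2 ≤ n := by
        intro t ht
        simp only [List.mem_append] at ht
        rcases ht with (h | h) | h <;> exact (Tijk_mem n t h).2.2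
      have hbase : ∀ i j, 1 ≤ i → i ≤ n → 1 ≤ j → j ≤ n →
          ∃ P : List ℕ, P ≠ [] ∧ (∀ v ∈ P, 1 ≤ v ∧ v ≤ n) ∧
            P.getD 0 0 = i ∧ P.getD (P.length - 1) 0 = j ∧ pathWeight A P = A i j := by
        intro i j hi1 hi2 hj1 hj2
        exact ⟨[i, j], by simp, by
          intro v hv
          rcases List.mem_cons.mp hv with rfl | hv'
          · exact ⟨hi1, hi2⟩
          · rcases List.mem_cons.mp hv' with rfl | hv''
            · exact ⟨hj1, hj2⟩
            · simp at hv'', rfl, rfl, pathWeight_pair A i j⟩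
      obtain ⟨P, h1, h2, h3, h4, h5⟩ :=
        relax_mem n A (Tijk n ++ Tijk n ++ Tijk n) hTb A hbase i j hi1 hi2 hj1 hj2
      exact ⟨P, h1, h2, h3, h4, h5⟩
    · -- lower bound
      rintro c ⟨P, hPne, hPb, hP0, hPl, rfl⟩
      rcases Nat.lt_or_ge P.length 2 with hP1 | hP2
      · -- P is a single vertex, so i = j and its weight is 0
        have hlen1 : P.length = 1 := by
          cases P
          · exact absurd rfl hPne
          · simp only [List.length_cons] at hP1 ⊢
            omega
        obtain ⟨a, rfl⟩ := List.length_eq_one_iff.mp hlen1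
        have ha : a = i := by rw [← hP0]; rfl
        have hij : i = j := by rw [← hP0, ← hPl, hlen1]
        subst hij
        subst ha
        calc relaxAll A (Tijk n ++ Tijk n ++ Tijk n) a a ≤ A a a := relaxAll_le _ _ _ _
          _ = 0 := hA0 a
          _ = pathWeight A [a] := (pathWeight_single A a).symm
      · obtain ⟨Q, hQnd, hQne, hQb, hQh, hQl, hQw⟩ :=
          dedup_path n A hNeg P.length P le_rfl hPne hPb
        have hQ0 : Q.getD 0 0 = i := by
          rw [getD_zero_head?, hQh, ← getD_zero_head?, hP0]
        have hQl' : Q.getD (Q.length - 1) 0 = j := by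
          rw [getD_last_getLast?, hQl, ← getD_last_getLast?, hPl]
        rcases Nat.lt_or_ge Q.length 2 with hQ1 | hQ2
        · have hlen1 : Q.length = 1 := by
            cases Q
            · exact absurd rfl hQne
            · simp only [List.length_cons] at hQ1 ⊢
              omega
          have hij : i = j := by rw [← hQ0, ← hQl', hlen1]
          obtain ⟨a, rfl⟩ := List.length_eq_one_iff.mp hlen1
          rw [pathWeight_single] at hQw
          subst hij
          calc relaxAll A (Tijk n ++ Tijk n ++ Tijk n) i i ≤ A i i := relaxAll_le _ _ _ _
            _ = 0 := hA0 i
            _ ≤ pathWeight A P := hQw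
        · have hreal : Realized (Tijk n ++ Tijk n ++ Tijk n) Q :=
            all_realized n Q hQnd hQb hQ2
          have hle := realized_le A hA0 hreal (by omega)
          rw [hQ0, hQl'] at hle
          exact le_trans hle hQw
end

section
/- Let P = (p_0,...,p_k) be a simple path, and let m be the index of the maximum vertex of P. Define a 'skyscraper' to be an index i with: i < m and no j < i has p_j > p_i; or i = m; or i > m and no j > i has p_j > p_i. Then for any two consecutive skyscraper indices s < s', the subpath (p_s,...,p_{s'}) has no interior vertex exceeding min(p_s, p_{s'}); in particular it is a valley (hence proper) path. -/
/-- `i` is a skyscraper index of `P` relative to the index `m` of the maximum vertex. -/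
def Skyscraper (P : List ℕ) (m i : ℕ) : Prop :=
  i < P.length ∧
    ((i < m ∧ ∀ j < i, P.getD j 0 ≤ P.getD i 0) ∨ i = m ∨
     (m < i ∧ ∀ j, i < j → j < P.length → P.getD j 0 ≤ P.getD i 0))

/-- Between two consecutive skyscraper indices `s < s'` of a simple path, no interior
vertex exceeds `min(p_s, p_{s'})`; in particular the subpath from `s` to `s'`
is a valley path. -/
theorem stmt7 (n : ℕ) (P : List ℕ) (hP : ValidPath n P) (hnd : P.Nodup)
    (m : ℕ) (hm : m < P.length) (hmax : ∀ t < P.length, P.getD t 0 ≤ P.getD m 0)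
    (s s' : ℕ) (hs : Skyscraper P m s) (hs' : Skyscraper P m s') (hlt : s < s')
    (hcons : ∀ t, s < t → t < s' → ¬ Skyscraper P m t) :
    (∀ t, s < t → t < s' → P.getD t 0 ≤ min (P.getD s 0) (P.getD s' 0)) ∧
    Valley ((P.drop s).take (s' - s + 1)) := by

  obtain ⟨hs1, hs2⟩ := hs
  obtain ⟨hs'1, hs'2⟩ := hs'
  have hslen : s < P.length := lt_trans hlt hs'1
  have hms : s' ≤ m ∨ m ≤ s := by
    by_contra h
    push_neg at h
    exact hcons m h.2 h.1 ⟨hm, Or.inr (Or.inl rfl)⟩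
  have key : ∀ t, s < t → t < s' → P.getD t 0 ≤ min (P.getD s 0) (P.getD s' 0) := by
    rcases hms with hA | hB
    · -- s < s' ≤ m
      have hsm : s < m := lt_of_lt_of_le hlt hA
      have hsleft : ∀ j < s, P.getD j 0 ≤ P.getD s 0 := by
        rcases hs2 with ⟨_, h⟩ | rfl | ⟨h, _⟩
        · exact h
        · exact absurd hsm (lt_irrefl _)
        · exact absurd hsm (not_lt.2 h.le)
      have hs'left : ∀ j < s', P.getD j 0 ≤ P.getD s' 0 := by
        rcases hs'2 with ⟨_, h⟩ | rfl | ⟨h, _⟩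
        · exact h
        · exact fun j hj => hmax j (lt_trans hj hm)
        · exact absurd hA (not_le.2 h)
      have hss' : P.getD s 0 ≤ P.getD s' 0 := hs'left s hlt
      intro t hts hts'
      rw [min_eq_left hss']
      by_contra hc
      push_neg at hc
      obtain ⟨t', ht'mem, ht'max⟩ := Finset.exists_max_image (Finset.Ioo s s')
        (fun u => P.getD u 0) ⟨t, Finset.mem_Ioo.2 ⟨hts, hts'⟩⟩
      obtain ⟨hst', ht's'⟩ := Finset.mem_Ioo.1 ht'mem
      have hbig : P.getD s 0 < P.getD t' 0 :=
        lt_of_lt_of_le hc (ht'max t (Finset.mem_Ioo.2 ⟨hts, hts'⟩))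
      refine hcons t' hst' ht's' ⟨lt_trans ht's' hs'1,
        Or.inl ⟨lt_of_lt_of_le ht's' hA, ?_⟩⟩
      intro j hj
      rcases lt_trichotomy j s with h1 | h1 | h1
      · exact le_of_lt (lt_of_le_of_lt (hsleft j h1) hbig)
      · exact h1 ▸ le_of_lt hbig
      · exact ht'max j (Finset.mem_Ioo.2 ⟨h1, lt_trans hj ht's'⟩)
    · -- m ≤ s < s'
      have hms' : m < s' := lt_of_le_of_lt hB hlt
      have hs'right : ∀ j, s' < j → j < P.length → P.getD j 0 ≤ P.getD s' 0 := by
        rcases hs'2 with ⟨h, _⟩ | rfl | ⟨_, h⟩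
        · exact absurd hms' (not_lt.2 h.le)
        · exact absurd hms' (lt_irrefl _)
        · exact h
      have hsright : ∀ j, s < j → j < P.length → P.getD j 0 ≤ P.getD s 0 := by
        rcases hs2 with ⟨h, _⟩ | rfl | ⟨_, h⟩
        · exact absurd hB (not_le.2 h)
        · exact fun j _ hj2 => hmax j hj2
        · exact h
      have hss' : P.getD s' 0 ≤ P.getD s 0 := hsright s' hlt hs'1
      intro t hts hts'
      rw [min_eq_right hss']
      by_contra hc
      push_neg at hc
      obtain ⟨t', ht'mem, ht'max⟩ := Finset.exists_max_image (Finset.Ioo s s')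
        (fun u => P.getD u 0) ⟨t, Finset.mem_Ioo.2 ⟨hts, hts'⟩⟩
      obtain ⟨hst', ht's'⟩ := Finset.mem_Ioo.1 ht'mem
      have hbig : P.getD s' 0 < P.getD t' 0 :=
        lt_of_lt_of_le hc (ht'max t (Finset.mem_Ioo.2 ⟨hts, hts'⟩))
      refine hcons t' hst' ht's' ⟨lt_trans ht's' hs'1,
        Or.inr (Or.inr ⟨lt_of_le_of_lt hB hst', ?_⟩)⟩
      intro j hj hjlen
      rcases lt_trichotomy j s' with h1 | h1 | h1
      · exact ht'max j (Finset.mem_Ioo.2 ⟨lt_trans hst' hj, h1⟩)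
      · exact h1 ▸ le_of_lt hbig
      · exact le_of_lt (lt_of_le_of_lt (hs'right j h1 hjlen) hbig)
  refine ⟨key, ?_⟩
  intro t ht1 ht2
  have hLlen : ((P.drop s).take (s' - s + 1)).length = s' - s + 1 := by
    simp only [List.length_take, List.length_drop]
    omega
  have hget : ∀ u, u ≤ s' - s → ((P.drop s).take (s' - s + 1)).getD u 0 = P.getD (s + u) 0 := by
    intro u hu
    rw [List.getD_eq_getElem?_getD, List.getD_eq_getElem?_getD,
      List.getElem?_take, List.getElem?_drop]
    simp [Nat.lt_succ_of_le hu]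
  rw [hLlen] at ht2
  have hts : s < s + t := by omega
  have hts' : s + t < s' := by omega
  rw [hLlen, hget t (by omega), hget 0 (by omega)]
  have h1 : s' - s + 1 - 1 = s' - s := by omega
  rw [h1, hget (s' - s) le_rfl, Nat.add_zero]
  have h2 : s + (s' - s) = s' := by omega
  rw [h2]
  exact key (s + t) hts hts'
end

section
/- If a path P = (p_0,...,p_k) with p_0 < p_k is such that (p_0,...,p_x) is proper and (p_x,...,p_k) is increasing for some x with p_x ≥ p_0, then the total weight of P equals the weight of the proper part plus the weight of the increasing part; moreover the minimum weight over all such paths from i to j (for i < j) satisfies the recurrence M[i,j] = min( Proper[i,j], min over edges (k,j) with i ≤ k < j of M[i,k] + w(k,j) ), where Proper[i,j] is the minimum weight of a proper path from i to j. -/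
/-- Total weight of a path, with `EReal` weights. -/
noncomputable def pathWeightE (W : ℕ → ℕ → EReal) (P : List ℕ) : EReal :=
  ((P.zip P.tail).map fun q => W q.1 q.2).sum

/-- The set of weights of paths from `i` to `j` decomposable as a proper path
followed by an increasing path, with junction vertex `≥ i`. -/
def DecompSet (n : ℕ) (W : ℕ → ℕ → EReal) (i j : ℕ) : Set EReal :=
  {c | ∃ P : List ℕ, ValidPath n P ∧ P.getD 0 0 = i ∧ P.getD (P.length - 1) 0 = j ∧
    (∃ x ≤ P.length - 1, (x = 0 ∨ Proper (P.take (x + 1))) ∧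
      (x = P.length - 1 ∨ Increasing (P.drop x)) ∧ i ≤ P.getD x 0) ∧
    pathWeightE W P = c}

/-- `M[i,j]`: the minimum weight over decomposable paths from `i` to `j`
(`⊤` if there are none). -/
noncomputable def MMin (n : ℕ) (W : ℕ → ℕ → EReal) (i j : ℕ) : EReal :=
  sInf (DecompSet n W i j)

/-- `Proper[i,j]`: the minimum weight of a proper path from `i` to `j`. -/
noncomputable def ProperMin (n : ℕ) (W : ℕ → ℕ → EReal) (i j : ℕ) : EReal :=
  sInf {c | ∃ P : List ℕ, ValidPath n P ∧ P.getD 0 0 = i ∧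
    P.getD (P.length - 1) 0 = j ∧ Proper P ∧ pathWeightE W P = c}


section Helpers

lemma getD_eq_getElem' (l : List ℕ) (n : ℕ) (h : n < l.length) : l.getD n 0 = l[n] := by
  simp [List.getD_eq_getElem?_getD, List.getElem?_eq_getElem h]

lemma getD_take' {P : List ℕ} {m t : ℕ} (h : t < m) : (P.take m).getD t 0 = P.getD t 0 := by
  simp [List.getD_eq_getElem?_getD, List.getElem?_take, h]

lemma getD_drop' (P : List ℕ) (x t : ℕ) : (P.drop x).getD t 0 = P.getD (x + t) 0 := by
  simp [List.getD_eq_getElem?_getD, List.getElem?_drop]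

lemma getD_append_left' {P Q : List ℕ} {t : ℕ} (h : t < P.length) :
    (P ++ Q).getD t 0 = P.getD t 0 := by
  simp [List.getD_eq_getElem?_getD, List.getElem?_append_left h]

lemma edges_take : ∀ (P : List ℕ) (x : ℕ),
    (P.take (x+1)).zip (P.take (x+1)).tail = (P.zip P.tail).take x
  | [], x => by simp
  | [a], x => by simp
  | a :: b :: r, 0 => by simp
  | a :: b :: r, (x+1) => by
    have ih := edges_take (b :: r) x
    simpa [List.take_succ_cons, List.zip_cons_cons] using ih

lemma edges_drop (P : List ℕ) (x : ℕ) :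
    (P.drop x).zip (P.drop x).tail = (P.zip P.tail).drop x := by
  show List.zipWith Prod.mk _ _ = _
  rw [show P.zip P.tail = List.zipWith Prod.mk P P.tail from rfl, List.drop_zipWith,
    List.tail_drop]
  congr 1
  rw [← List.drop_one, List.drop_drop]
  congr 1
  omega

lemma pathWeightE_split (W : ℕ → ℕ → EReal) (P : List ℕ) (x : ℕ) :
    pathWeightE W P = pathWeightE W (P.take (x+1)) + pathWeightE W (P.drop x) := by
  unfold pathWeightE
  rw [edges_take, edges_drop, ← List.sum_append, ← List.map_append,
    List.take_append_drop]

lemma pathWeightE_pair (W : ℕ → ℕ → EReal) (a b : ℕ) : pathWeightE W [a, b] = W a b := by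
  simp [pathWeightE]

lemma sum_ne_bot' : ∀ (l : List EReal), (∀ a ∈ l, a ≠ ⊥) → l.sum ≠ ⊥
  | [], _ => by simp
  | a :: l, h => by
    simp only [List.sum_cons, ne_eq, EReal.add_eq_bot_iff]
    push_neg
    exact ⟨h a (by simp), sum_ne_bot' l fun b hb => h b (by simp [hb])⟩

lemma pathWeightE_ne_bot (W : ℕ → ℕ → EReal) (hW : ∀ u v, W u v ≠ ⊥) (P : List ℕ) :
    pathWeightE W P ≠ ⊥ := by
  apply sum_ne_bot'
  intro a ha
  obtain ⟨q, _, rfl⟩ := List.mem_map.mp ha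
  exact hW _ _

lemma pairwise_getD {l : List ℕ} (h : List.Pairwise (· < ·) l) {a b : ℕ}
    (hab : a < b) (hb : b < l.length) : l.getD a 0 < l.getD b 0 := by
  rw [getD_eq_getElem' _ _ (lt_trans hab hb), getD_eq_getElem' _ _ hb]
  exact List.pairwise_iff_getElem.mp h a b (lt_trans hab hb) hb hab

lemma decomp_extend (n : ℕ) (W : ℕ → ℕ → EReal) (i j k : ℕ)
    (h1j : 1 ≤ j) (hjn : j ≤ n) (hkj : k < j) {t : EReal}
    (ht : t ∈ DecompSet n W i k) : t + W k j ∈ DecompSet n W i j := by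
  obtain ⟨Q, ⟨hQ2, hQmem⟩, h0, hl, ⟨x, hx, hprop, hinc, hix⟩, hwt⟩ := ht
  have hL : 2 ≤ Q.length := hQ2
  set L := Q.length with hLdef
  have hkQ : Q.drop (L-1) = [k] := by
    have hlen : (Q.drop (L-1)).length = 1 := by simp; omega
    obtain ⟨a, ha⟩ := List.length_eq_one_iff.mp hlen
    have h1 := getD_drop' Q (L-1) 0
    rw [ha, show L - 1 + 0 = L - 1 by omega, hl] at h1
    simp at h1
    rw [ha, h1]
  refine ⟨Q ++ [j], ⟨by simp; omega, ?_⟩, ?_, ?_, ⟨x, ?_, ?_, ?_, ?_⟩, ?_⟩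
  · intro v hv
    rcases List.mem_append.mp hv with h | h
    · exact hQmem v h
    · simp at h; subst h; exact ⟨h1j, hjn⟩
  · rw [getD_append_left' (by omega)]; exact h0
  · rw [show (Q ++ [j]).length - 1 = Q.length by simp]
    simp [List.getD_eq_getElem?_getD, List.getElem?_concat_length]
  · simp; omega
  · rcases hprop with h | h
    · exact Or.inl h
    · right; rwa [List.take_append_of_le_length (by omega)]
  · right
    rw [List.drop_append_of_le_length (by omega)]
    show List.IsChain _ _
    rw [List.isChain_append]
    refine ⟨?_, by simp, ?_⟩
    · rcases hinc with hxe | h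
      · rw [hxe, hkQ]; simp
      · exact h
    · intro a ha b hb
      simp at hb
      subst hb
      have hlast : (Q.drop x).getLast? = some k := by
        rw [List.getLast?_eq_getElem?]
        have hlen : (Q.drop x).length = L - x := by simp [hLdef]
        rw [hlen, List.getElem?_drop, show x + (L - x - 1) = L - 1 by omega,
          List.getElem?_eq_getElem (by omega)]
        rw [← getD_eq_getElem' Q (L-1) (by omega), hl]
      rw [hlast] at ha
      simp at ha
      subst ha
      exact hkj
  · rw [getD_append_left' (by omega)]; exact hix
  · have hsplit := pathWeightE_split W (Q ++ [j]) (L - 1)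
    have htake : (Q ++ [j]).take (L - 1 + 1) = Q := by
      rw [show L - 1 + 1 = L by omega, List.take_append_of_le_length (le_refl _),
        List.take_length]
    have hdrop : (Q ++ [j]).drop (L - 1) = [k, j] := by
      rw [List.drop_append_of_le_length (by omega), hkQ]
      rfl
    rw [hsplit, htake, hdrop, pathWeightE_pair, hwt]

end Helpers

/-- For a path decomposable as proper followed by increasing, its weight splits as
the sum of the two parts; and `M[i,j]` (for `i < j`) satisfies the recurrence
`M[i,j] = min(Proper[i,j], min over edges (k,j) with i ≤ k < j of M[i,k] + w(k,j))`. -/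
theorem stmt11 (n : ℕ) (W : ℕ → ℕ → EReal) (hW : ∀ u v, W u v ≠ ⊥)
    (hcyc : ∀ P : List ℕ, 2 ≤ P.length → (∀ v ∈ P, 1 ≤ v ∧ v ≤ n) →
      P.getD 0 0 = P.getD (P.length - 1) 0 → 0 ≤ pathWeightE W P)
    (i j : ℕ) (hi1 : 1 ≤ i) (hjn : j ≤ n) (hij : i < j) :
    (∀ P : List ℕ, ValidPath n P → P.getD 0 0 = i → P.getD (P.length - 1) 0 = j →
      ∀ x ≤ P.length - 1, (x = 0 ∨ Proper (P.take (x + 1))) →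
        (x = P.length - 1 ∨ Increasing (P.drop x)) → i ≤ P.getD x 0 →
        pathWeightE W P = pathWeightE W (P.take (x + 1)) + pathWeightE W (P.drop x)) ∧
    MMin n W i j = min (ProperMin n W i j)
      (sInf {c | ∃ k, i ≤ k ∧ k < j ∧ W k j ≠ ⊤ ∧ c = MMin n W i k + W k j}) := by
  constructor
  · intro P _ _ _ x _ _ _ _
    exact pathWeightE_split W P x
  · apply le_antisymm
    · apply le_min
      · apply sInf_le_sInf
        rintro c ⟨P, hv, h0, hl, hp, hw⟩
        exact ⟨P, hv, h0, hl, ⟨P.length - 1, le_refl _,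
          Or.inr (by rw [List.take_of_length_le (by have := hv.1; omega)]; exact hp),
          Or.inl rfl, by rw [hl]; exact hij.le⟩, hw⟩
      · apply le_sInf
        rintro c ⟨k, hik, hkj, hWkj, rfl⟩
        rw [← EReal.sub_le_iff_le_add (Or.inl (hW k j)) (Or.inl hWkj)]
        show _ ≤ sInf (DecompSet n W i k)
        apply le_sInf
        intro t ht
        rw [EReal.sub_le_iff_le_add (Or.inl (hW k j)) (Or.inl hWkj)]
        exact sInf_le (decomp_extend n W i j k (by omega) hjn hkj ht)
    · apply le_sInf
      rintro c ⟨P, hv, h0, hl, ⟨x, hx, hprop, hinc, hix⟩, rfl⟩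
      have hL := hv.1
      by_cases hxl : x = P.length - 1
      · have hPP : Proper P := by
          rcases hprop with h0x | h
          · exfalso; omega
          · rwa [hxl, show P.length - 1 + 1 = P.length by omega, List.take_length] at h
        exact le_trans (min_le_left _ _) (sInf_le ⟨P, hv, h0, hl, hPP, rfl⟩)
      · by_cases hL3 : P.length ≤ 2
        · have hPP : Proper P := by rintro ⟨t, ht1, ht2, -⟩; omega
          exact le_trans (min_le_left _ _) (sInf_le ⟨P, hv, h0, hl, hPP, rfl⟩)
        · push_neg at hL3
          set L := P.length with hLdef
          have hx2 : x ≤ L - 2 := by omega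
          have hinc' : Increasing (P.drop x) := by
            rcases hinc with h | h
            · exfalso; omega
            · exact h
          have hpw : List.Pairwise (· < ·) (P.drop x) := List.isChain_iff_pairwise.mp hinc'
          set k := P.getD (L - 2) 0 with hkdef
          have hdplen : (P.drop x).length = L - x := by simp [hLdef]
          have e1 : (P.drop x).getD (L-2-x) 0 = k := by
            rw [getD_drop', show x + (L-2-x) = L-2 by omega]
          have e2 : (P.drop x).getD (L-1-x) 0 = j := by
            rw [getD_drop', show x + (L-1-x) = L-1 by omega]; exact hl
          have hkj : k < j := by
            have := pairwise_getD hpw (show L-2-x < L-1-x by omega)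
              (by rw [hdplen]; omega)
            rwa [e1, e2] at this
          have hik : i ≤ k := by
            rcases eq_or_lt_of_le hx2 with he | hlt
            · rw [hkdef, ← he]; exact hix
            · have e0 : (P.drop x).getD 0 0 = P.getD x 0 := by
                rw [getD_drop', Nat.add_zero]
              have := pairwise_getD hpw (show 0 < L-2-x by omega) (by rw [hdplen]; omega)
              rw [e0, e1] at this
              omega
          have hdrop2 : P.drop (L-2) = [k, j] := by
            have hlen2 : (P.drop (L-2)).length = 2 := by simp; omega
            obtain ⟨a, b, hab⟩ := List.length_eq_two.mp hlen2
            have ha := getD_drop' P (L-2) 0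
            rw [hab, Nat.add_zero] at ha
            simp at ha
            have hb := getD_drop' P (L-2) 1
            rw [hab, show L-2+1 = L-1 by omega, hl] at hb
            simp at hb
            rw [hab, ha, hb]
            simp [hkdef, List.getD_eq_getElem?_getD]
          have hsplit2 : pathWeightE W P = pathWeightE W (P.take (L-1)) + W k j := by
            have := pathWeightE_split W P (L-2)
            rwa [show L-2+1 = L-1 by omega, hdrop2, pathWeightE_pair] at this
          by_cases hWt : W k j = ⊤
          · rw [hsplit2, hWt, EReal.add_top_of_ne_bot (pathWeightE_ne_bot W hW _)]
            exact le_top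
          · refine le_trans (min_le_right _ _) (le_trans (sInf_le ⟨k, hik, hkj, hWt, rfl⟩) ?_)
            rw [hsplit2]
            refine add_le_add_left ?_ (W k j)
            apply sInf_le
            refine ⟨P.take (L-1), ⟨?_, fun v hv' => hv.2 v (List.take_subset _ _ hv')⟩,
              ?_, ?_, ⟨x, ?_, ?_, ?_, ?_⟩, rfl⟩
            · simp; omega
            · rw [getD_take' (by omega)]; exact h0
            · rw [show (P.take (L-1)).length - 1 = L - 2 by simp; omega,
                getD_take' (by omega)]
            · simp; omega
            · rcases hprop with h | h
              · exact Or.inl h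
              · right; rwa [List.take_take, show min (x+1) (L-1) = x+1 by omega]
            · rcases eq_or_lt_of_le hx2 with he | hlt
              · left; simp; omega
              · right
                show List.IsChain _ _
                rw [List.isChain_iff_pairwise, List.drop_take]
                exact List.Pairwise.sublist (List.take_sublist _ _) hpw
            · rw [getD_take' (by omega)]; exact hix
end
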